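/- arXiv:2203.12916 — 3 statements merged into one kernel-verified Lean document; each statement's English description precedes it below -/
import Mathlib

section
/- Let L ≥ 2, n ≥ 1 and 0 ≤ t ≤ n−1. The t-embedded edge-connectivity of K_L^n — the minimum size of an edge cut F such that every component of K_L^n − F contains an L-ary t-dimensional sub-layer of K_L^n — equals (L−1)(n−t)L^t. -/
attribute [local instance] Classical.propDecidable

/-- The Hamming graph `K_L^n`: vertices are the strings in `{0,…,L-1}^n`, two vertices
being adjacent iff they differ in exactly one coordinate. -/
def hammingGraph (L n : ℕ) : SimpleGraph (Fin n → Fin L) where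
  Adj u v := u ≠ v ∧ ∀ i j : Fin n, u i ≠ v i → u j ≠ v j → i = j
  symm := ⟨fun _ _ ⟨h1, h2⟩ => ⟨h1.symm, fun i j hi hj => h2 i j hi.symm hj.symm⟩⟩
  loopless := ⟨fun _ ⟨h1, _⟩ => h1 rfl⟩

/-- An `L`-ary `t`-dimensional sub-layer of `K_L^n`: the set of vertices obtained by fixing
some `n - t` coordinates. -/
def IsSubLayer (L n t : ℕ) (X : Set (Fin n → Fin L)) : Prop :=
  ∃ (S : Finset (Fin n)) (z : Fin n → Fin L),
    S.card = n - t ∧ X = {v | ∀ i ∈ S, v i = z i}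

/-- The `t`-embedded edge-connectivity of `K_L^n`: the minimum size of an edge cut `F` such that
every component of `K_L^n − F` contains an `L`-ary `t`-dimensional sub-layer. -/
noncomputable def embEC (L n t : ℕ) : ℕ :=
  sInf {k | ∃ F : Finset (Sym2 (Fin n → Fin L)),
    ↑F ⊆ (hammingGraph L n).edgeSet ∧
    ¬((hammingGraph L n).deleteEdges ↑F).Connected ∧
    (∀ C : ((hammingGraph L n).deleteEdges ↑F).ConnectedComponent,
      ∃ X, IsSubLayer L n t X ∧ X ⊆ C.supp) ∧
    F.card = k}

namespace HamProof

variable {L n : ℕ}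

abbrev V (L n : ℕ) := Fin n → Fin L

lemma adj_update2 {v : V L n} {i : Fin n} {c c' : Fin L} (h : c ≠ c') :
    (hammingGraph L n).Adj (Function.update v i c) (Function.update v i c') := by
  constructor
  · intro he
    have := congrFun he i
    simp only [Function.update_self] at this
    exact h this
  · intro k l hk hl
    have hk' : k = i := by
      by_contra hne
      rw [Function.update_of_ne hne, Function.update_of_ne hne] at hk
      exact hk rfl
    have hl' : l = i := by
      by_contra hne
      rw [Function.update_of_ne hne, Function.update_of_ne hne] at hl
      exact hl rfl
    rw [hk', hl']

lemma adj_update {v : V L n} {i : Fin n} {c : Fin L} (h : c ≠ v i) :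
    (hammingGraph L n).Adj v (Function.update v i c) := by
  have h2 := adj_update2 (v := v) (i := i) (Ne.symm h)
  rwa [Function.update_eq_self] at h2

def lay (x : V L n) (W : Finset (Fin n)) : Set (V L n) := {v | ∀ i, i ∉ W → v i = x i}

lemma lay_self (x : V L n) (W : Finset (Fin n)) : x ∈ lay x W := fun _ _ => rfl

lemma lay_update {x v : V L n} {W : Finset (Fin n)} (hv : v ∈ lay x W) {i : Fin n}
    (hi : i ∈ W) (c : Fin L) : Function.update v i c ∈ lay x W := by
  intro k hk
  rw [Function.update_of_ne (by rintro rfl; exact hk hi)]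
  exact hv k hk

lemma lay_mono {x x' : V L n} {W W' : Finset (Fin n)} (hx : x' ∈ lay x W) (hW : W' ⊆ W) :
    lay x' W' ⊆ lay x W := by
  intro v hv k hk
  rw [hv k (fun h => hk (hW h))]
  exact hx k hk

noncomputable def cutP (A : Set (V L n)) (x : V L n) (W : Finset (Fin n)) :
    Finset (V L n × V L n) :=
  Finset.univ.filter fun p => (hammingGraph L n).Adj p.1 p.2 ∧ p.1 ∈ A ∧ p.2 ∉ A ∧
    p.1 ∈ lay x W ∧ p.2 ∈ lay x W

lemma mem_cutP {A : Set (V L n)} {x : V L n} {W : Finset (Fin n)} {p : V L n × V L n} :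
    p ∈ cutP A x W ↔ (hammingGraph L n).Adj p.1 p.2 ∧ p.1 ∈ A ∧ p.2 ∉ A ∧
      p.1 ∈ lay x W ∧ p.2 ∈ lay x W := by
  simp [cutP]

lemma cutP_mono {A : Set (V L n)} {x x' : V L n} {W W' : Finset (Fin n)}
    (hx : x' ∈ lay x W) (hW : W' ⊆ W) : cutP A x' W' ⊆ cutP A x W := by
  intro p hp
  rw [mem_cutP] at hp ⊢
  exact ⟨hp.1, hp.2.1, hp.2.2.1, lay_mono hx hW hp.2.2.2.1, lay_mono hx hW hp.2.2.2.2⟩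

lemma cutP_fst_coord {A : Set (V L n)} {x : V L n} {W : Finset (Fin n)} {p : V L n × V L n}
    (hp : p ∈ cutP A x W) {i : Fin n} (hi : i ∉ W) : p.1 i = x i ∧ p.2 i = x i := by
  rw [mem_cutP] at hp
  exact ⟨hp.2.2.2.1 i hi, hp.2.2.2.2 i hi⟩

noncomputable def lineCut (A : Set (V L n)) (v : V L n) (i : Fin n) :
    Finset (V L n × V L n) :=
  ((Finset.univ.filter fun c : Fin L => Function.update v i c ∈ A) ×ˢ
    (Finset.univ.filter fun c : Fin L => Function.update v i c ∉ A)).image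
    (fun cc => (Function.update v i cc.1, Function.update v i cc.2))

lemma card_lineCut (A : Set (V L n)) (v : V L n) (i : Fin n)
    (h1 : ∃ c, Function.update v i c ∈ A) (h2 : ∃ c, Function.update v i c ∉ A) :
    L - 1 ≤ (lineCut A v i).card := by
  classical
  set s := Finset.univ.filter fun c : Fin L => Function.update v i c ∈ A with hs
  set t := Finset.univ.filter fun c : Fin L => Function.update v i c ∉ A with hts
  have hinj : Set.InjOn (fun cc : Fin L × Fin L =>
      (Function.update v i cc.1, Function.update v i cc.2)) ↑(s ×ˢ t) := by
    intro a _ b _ hab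
    have h1 := congrFun (congrArg Prod.fst hab) i
    have h2 := congrFun (congrArg Prod.snd hab) i
    simp only [Function.update_self] at h1 h2
    exact Prod.ext h1 h2
  have hcard : (lineCut A v i).card = s.card * t.card := by
    rw [lineCut, Finset.card_image_of_injOn hinj, Finset.card_product]
  rw [hcard]
  have hsum : s.card + t.card = L := by
    rw [hs, hts, Finset.card_filter_add_card_filter_not]
    simp
  obtain ⟨c1, hc1⟩ := h1
  obtain ⟨c2, hc2⟩ := h2
  have hs1 : 1 ≤ s.card := Finset.card_pos.2 ⟨c1, by simp [hs, hc1]⟩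
  have ht1 : 1 ≤ t.card := Finset.card_pos.2 ⟨c2, by simp [hts, hc2]⟩
  obtain ⟨a, ha⟩ : ∃ a, s.card = a + 1 := ⟨s.card - 1, by omega⟩
  obtain ⟨b, hb⟩ : ∃ b, t.card = b + 1 := ⟨t.card - 1, by omega⟩
  have he : s.card * t.card = a*b + (a + b + 1) := by rw [ha, hb]; ring
  omega

lemma lineCut_spec {A : Set (V L n)} {v : V L n} {i : Fin n} {p : V L n × V L n}
    (hp : p ∈ lineCut A v i) :
    p.1 ∈ A ∧ p.2 ∉ A ∧ p.1 i ≠ p.2 i ∧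
      p.1 = Function.update v i (p.1 i) ∧ p.2 = Function.update v i (p.2 i) := by
  classical
  simp only [lineCut, Finset.mem_image, Finset.mem_product, Finset.mem_filter] at hp
  obtain ⟨cc, ⟨⟨_, hc1⟩, ⟨_, hc2⟩⟩, hpe⟩ := hp
  subst hpe
  refine ⟨hc1, hc2, ?_, by simp, by simp⟩
  simp only [Function.update_self]
  intro h
  rw [h] at hc1
  exact hc2 hc1

lemma lineCut_subset_cutP {A : Set (V L n)} {x v : V L n} {W : Finset (Fin n)} {i : Fin n}
    (hv : v ∈ lay x W) (hi : i ∈ W) : lineCut A v i ⊆ cutP A x W := by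
  intro p hp
  obtain ⟨h1, h2, h3, h4, h5⟩ := lineCut_spec hp
  rw [mem_cutP]
  refine ⟨?_, h1, h2, ?_, ?_⟩
  · rw [h4, h5]; exact adj_update2 h3
  · rw [h4]; exact lay_update hv hi _
  · rw [h5]; exact lay_update hv hi _

lemma two_disj_card {α : Type*} [DecidableEq α] {s t u : Finset α} (hs : s ⊆ u) (ht : t ⊆ u)
    (hd : Disjoint s t) : s.card + t.card ≤ u.card := by
  rw [← Finset.card_union_of_disjoint hd]
  exact Finset.card_le_card (Finset.union_subset hs ht)


/-- The key isoperimetric lemma. -/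
lemma L0 (hL : 2 ≤ L) : ∀ (m : ℕ) (W : Finset (Fin n)) (A : Set (V L n)) (x y : V L n),
    W.card ≤ m → x ∈ A → y ∉ A → (∀ i, i ∉ W → x i = y i) →
    (L - 1) * W.card ≤ (cutP A x W).card := by
  intro m
  induction m with
  | zero =>
    intro W A x y hWm hx hy hxy
    have : x = y := funext fun i => hxy i (by
      have : W = ∅ := Finset.card_eq_zero.1 (by omega)
      simp [this])
    exact absurd (this ▸ hx) hy
  | succ m IH =>
    intro W A x y hWm hx hy hxy
    by_cases hwm : W.card ≤ m
    · exact IH W A x y hwm hx hy hxy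
    have hw : W.card = m + 1 := by omega
    have alpha : ∀ x' y', x' ∈ A → y' ∉ A → x' ∈ lay x W → y' ∈ lay x W →
        (∀ i, i ∉ W → x' i = y' i) → (∃ j ∈ W, x' j = y' j) →
        (L - 1) * W.card ≤ (cutP A x W).card := by
      rintro x' y' hx' hy' hlx' hly' hxy' ⟨j, hjW, hagr⟩
      have herase : (W.erase j).card = m := by rw [Finset.card_erase_of_mem hjW]; omega
      have heraseS : W.erase j ⊆ W := Finset.erase_subset _ _
      have hne : x' ≠ y' := fun h => hy' (h ▸ hx')
      obtain ⟨i0, hi0⟩ : ∃ i0, x' i0 ≠ y' i0 := by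
        by_contra hc; push_neg at hc; exact hne (funext hc)
      have hi0W : i0 ∈ W := by by_contra hc; exact hi0 (hxy' i0 hc)
      have hij : i0 ≠ j := fun h => hi0 (h ▸ hagr)
      have hm1 : 1 ≤ m := by
        have : 1 < W.card := Finset.one_lt_card.2 ⟨i0, hi0W, j, hjW, hij⟩
        omega
      by_cases hsplit : ∃ v ∈ lay x W, (∃ c, Function.update v j c ∈ A) ∧
          (∃ c, Function.update v j c ∉ A)
      · obtain ⟨v, hvlay, hvA, hvN⟩ := hsplit
        have hline : L - 1 ≤ (lineCut A v j).card := card_lineCut A v j hvA hvN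
        have hslice : (L-1) * m ≤ (cutP A x' (W.erase j)).card := by
          have := IH (W.erase j) A x' y' (le_of_eq herase) hx' hy' (by
            intro i hi
            by_cases hij' : i = j
            · rw [hij']; exact hagr
            · exact hxy' i (fun h => hi (Finset.mem_erase.2 ⟨hij', h⟩)))
          rwa [herase] at this
        have hsub1 : cutP A x' (W.erase j) ⊆ cutP A x W := cutP_mono hlx' heraseS
        have hsub2 : lineCut A v j ⊆ cutP A x W := lineCut_subset_cutP hvlay hjW
        have hdisj : Disjoint (cutP A x' (W.erase j)) (lineCut A v j) := by
          rw [Finset.disjoint_left]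
          intro p hp hp'
          have h1 := (cutP_fst_coord hp (Finset.notMem_erase j W)).1
          have h2 := (cutP_fst_coord hp (Finset.notMem_erase j W)).2
          exact (lineCut_spec hp').2.2.1 (by rw [h1, h2])
        calc (L-1) * W.card = (L-1)*m + (L-1) := by rw [hw]; ring
        _ ≤ (cutP A x' (W.erase j)).card + (lineCut A v j).card := add_le_add hslice hline
        _ ≤ (cutP A x W).card := two_disj_card hsub1 hsub2 hdisj
      · have hmono : ∀ v, v ∈ lay x W → ∀ c c', Function.update v j c ∈ A →
            Function.update v j c' ∈ A := by
          intro v hv c c' hc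
          by_contra hcon
          exact hsplit ⟨v, hv, ⟨c, hc⟩, ⟨c', hcon⟩⟩
        have hsliceAll : ∀ c : Fin L,
            (L-1)*m ≤ (cutP A (Function.update x' j c) (W.erase j)).card := by
          intro c
          have := IH (W.erase j) A (Function.update x' j c) (Function.update y' j c)
            (le_of_eq herase)
            (hmono x' hlx' (x' j) c (by rw [Function.update_eq_self]; exact hx'))
            (by
              intro hcon
              exact hy' (by
                have := hmono y' hly' c (y' j) hcon
                rwa [Function.update_eq_self] at this))
            (by
              intro i hi
              by_cases hij' : i = j
              · subst hij'; simp
              · rw [Function.update_of_ne hij', Function.update_of_ne hij']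
                exact hxy' i (fun h => hi (Finset.mem_erase.2 ⟨hij', h⟩)))
          rwa [herase] at this
        have hbu : (Finset.univ.biUnion fun c : Fin L =>
            cutP A (Function.update x' j c) (W.erase j)) ⊆ cutP A x W := by
          intro p hp
          simp only [Finset.mem_biUnion] at hp
          obtain ⟨c, _, hp⟩ := hp
          exact cutP_mono (lay_update hlx' hjW c) heraseS hp
        have hdisjU : ∀ c1 ∈ (Finset.univ : Finset (Fin L)), ∀ c2 ∈ Finset.univ, c1 ≠ c2 →
            Disjoint (cutP A (Function.update x' j c1) (W.erase j))
              (cutP A (Function.update x' j c2) (W.erase j)) := by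
          intro c1 _ c2 _ hcc
          rw [Finset.disjoint_left]
          intro p hp1 hp2
          have e1 := (cutP_fst_coord hp1 (Finset.notMem_erase j W)).1
          have e2 := (cutP_fst_coord hp2 (Finset.notMem_erase j W)).1
          rw [Function.update_self] at e1 e2
          exact hcc (by rw [← e1, ← e2])
        have hcardbu := Finset.card_biUnion hdisjU
        have hsum : L * ((L-1)*m) ≤
            ∑ c : Fin L, (cutP A (Function.update x' j c) (W.erase j)).card := by
          have := Finset.card_nsmul_le_sum (Finset.univ : Finset (Fin L))
            (fun c => (cutP A (Function.update x' j c) (W.erase j)).card)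
            ((L-1)*m) (fun c _ => hsliceAll c)
          simpa [Finset.card_univ, smul_eq_mul] using this
        have hstep : (L-1) * W.card ≤ L * ((L-1)*m) := by
          rw [hw]
          calc (L-1)*(m+1) = (L-1)*m + (L-1)*1 := by ring
          _ ≤ (L-1)*m + (L-1)*m := by
            exact Nat.add_le_add_left (Nat.mul_le_mul_left _ hm1) _
          _ = (L-1)*m * 2 := by ring
          _ ≤ (L-1)*m * L := Nat.mul_le_mul_left _ hL
          _ = L * ((L-1)*m) := by ring
        calc (L-1) * W.card ≤ L * ((L-1)*m) := hstep
        _ ≤ ∑ c : Fin L, (cutP A (Function.update x' j c) (W.erase j)).card := hsum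
        _ = (Finset.univ.biUnion fun c : Fin L =>
            cutP A (Function.update x' j c) (W.erase j)).card := hcardbu.symm
        _ ≤ (cutP A x W).card := Finset.card_le_card hbu
    -- main case split
    by_cases hagree : ∃ j ∈ W, x j = y j
    · exact alpha x y hx hy (lay_self x W) (fun i hi => (hxy i hi).symm) hxy hagree
    push_neg at hagree
    have hW1 : W.Nonempty := Finset.card_pos.1 (by omega)
    obtain ⟨i, hiW⟩ := hW1
    by_cases hw1 : W.card = 1
    · -- base case: a single free coordinate
      have hyx : y = Function.update x i (y i) := by
        funext k
        by_cases hk : k = i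
        · subst hk; simp
        · rw [Function.update_of_ne hk]
          refine (hxy k ?_).symm
          intro hkW
          have : k = i := by
            have := Finset.card_le_one.1 (le_of_eq hw1) k hkW i hiW
            exact this
          exact hk this
      have hsub : lineCut A x i ⊆ cutP A x W := lineCut_subset_cutP (lay_self x W) hiW
      have hcard : L - 1 ≤ (lineCut A x i).card := by
        refine card_lineCut A x i ⟨x i, ?_⟩ ⟨y i, ?_⟩
        · rw [Function.update_eq_self]; exact hx
        · rw [← hyx]; exact hy
      calc (L-1) * W.card = L - 1 := by rw [hw1]; ring
      _ ≤ (lineCut A x i).card := hcard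
      _ ≤ (cutP A x W).card := Finset.card_le_card hsub
    · -- |W| ≥ 2
      have herase : (W.erase i).card = m := by rw [Finset.card_erase_of_mem hiW]; omega
      have heraseS : W.erase i ⊆ W := Finset.erase_subset _ _
      have hm1 : 1 ≤ m := by omega
      have hylay : y ∈ lay x W := fun k hk => (hxy k hk).symm
      by_cases hb1 : ∃ c, Function.update x i c ∈ A ∧ Function.update y i c ∉ A
      · obtain ⟨c, hcA, hcN⟩ := hb1
        have hslice : (L-1) * m ≤ (cutP A (Function.update x i c) (W.erase i)).card := by
          have := IH (W.erase i) A (Function.update x i c) (Function.update y i c)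
            (le_of_eq herase) hcA hcN (by
              intro k hk
              by_cases hki : k = i
              · subst hki; simp
              · rw [Function.update_of_ne hki, Function.update_of_ne hki]
                exact hxy k (fun h => hk (Finset.mem_erase.2 ⟨hki, h⟩)))
          rwa [herase] at this
        have hsub1 : cutP A (Function.update x i c) (W.erase i) ⊆ cutP A x W :=
          cutP_mono (lay_update (lay_self x W) hiW c) heraseS
        have hdisjline : ∀ v, Disjoint (cutP A (Function.update x i c) (W.erase i))
            (lineCut A v i) := by
          intro v
          rw [Finset.disjoint_left]
          intro p hp hp'
          have h1 := (cutP_fst_coord hp (Finset.notMem_erase i W)).1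
          have h2 := (cutP_fst_coord hp (Finset.notMem_erase i W)).2
          exact (lineCut_spec hp').2.2.1 (by rw [h1, h2])
        by_cases hx1 : ∃ c', Function.update x i c' ∉ A
        · have hline : L - 1 ≤ (lineCut A x i).card :=
            card_lineCut A x i ⟨x i, by rw [Function.update_eq_self]; exact hx⟩ hx1
          have hsub2 : lineCut A x i ⊆ cutP A x W :=
            lineCut_subset_cutP (lay_self x W) hiW
          calc (L-1) * W.card = (L-1)*m + (L-1) := by rw [hw]; ring
          _ ≤ (cutP A (Function.update x i c) (W.erase i)).card + (lineCut A x i).card :=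
            add_le_add hslice hline
          _ ≤ (cutP A x W).card := two_disj_card hsub1 hsub2 (hdisjline x)
        · by_cases hy1 : ∃ c', Function.update y i c' ∈ A
          · have hline : L - 1 ≤ (lineCut A y i).card :=
              card_lineCut A y i hy1 ⟨y i, by rw [Function.update_eq_self]; exact hy⟩
            have hsub2 : lineCut A y i ⊆ cutP A x W := lineCut_subset_cutP hylay hiW
            calc (L-1) * W.card = (L-1)*m + (L-1) := by rw [hw]; ring
            _ ≤ (cutP A (Function.update x i c) (W.erase i)).card + (lineCut A y i).card :=
              add_le_add hslice hline
            _ ≤ (cutP A x W).card := two_disj_card hsub1 hsub2 (hdisjline y)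
          · -- x-line fully in A, y-line fully outside A: use all L slices
            push_neg at hx1 hy1
            have hsliceAll : ∀ c' : Fin L,
                (L-1)*m ≤ (cutP A (Function.update x i c') (W.erase i)).card := by
              intro c'
              have := IH (W.erase i) A (Function.update x i c') (Function.update y i c')
                (le_of_eq herase) (hx1 c') (hy1 c') (by
                  intro k hk
                  by_cases hki : k = i
                  · subst hki; simp
                  · rw [Function.update_of_ne hki, Function.update_of_ne hki]
                    exact hxy k (fun h => hk (Finset.mem_erase.2 ⟨hki, h⟩)))
              rwa [herase] at this
            have hbu : (Finset.univ.biUnion fun c' : Fin L =>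
                cutP A (Function.update x i c') (W.erase i)) ⊆ cutP A x W := by
              intro p hp
              simp only [Finset.mem_biUnion] at hp
              obtain ⟨c', _, hp⟩ := hp
              exact cutP_mono (lay_update (lay_self x W) hiW c') heraseS hp
            have hdisjU : ∀ c1 ∈ (Finset.univ : Finset (Fin L)), ∀ c2 ∈ Finset.univ,
                c1 ≠ c2 →
                Disjoint (cutP A (Function.update x i c1) (W.erase i))
                  (cutP A (Function.update x i c2) (W.erase i)) := by
              intro c1 _ c2 _ hcc
              rw [Finset.disjoint_left]
              intro p hp1 hp2
              have e1 := (cutP_fst_coord hp1 (Finset.notMem_erase i W)).1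
              have e2 := (cutP_fst_coord hp2 (Finset.notMem_erase i W)).1
              rw [Function.update_self] at e1 e2
              exact hcc (by rw [← e1, ← e2])
            have hcardbu := Finset.card_biUnion hdisjU
            have hsum : L * ((L-1)*m) ≤
                ∑ c' : Fin L, (cutP A (Function.update x i c') (W.erase i)).card := by
              have := Finset.card_nsmul_le_sum (Finset.univ : Finset (Fin L))
                (fun c' => (cutP A (Function.update x i c') (W.erase i)).card)
                ((L-1)*m) (fun c' _ => hsliceAll c')
              simpa [Finset.card_univ, smul_eq_mul] using this
            have hstep : (L-1) * W.card ≤ L * ((L-1)*m) := by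
              rw [hw]
              calc (L-1)*(m+1) = (L-1)*m + (L-1)*1 := by ring
              _ ≤ (L-1)*m + (L-1)*m := Nat.add_le_add_left (Nat.mul_le_mul_left _ hm1) _
              _ = (L-1)*m * 2 := by ring
              _ ≤ (L-1)*m * L := Nat.mul_le_mul_left _ hL
              _ = L * ((L-1)*m) := by ring
            calc (L-1) * W.card ≤ L * ((L-1)*m) := hstep
            _ ≤ ∑ c' : Fin L, (cutP A (Function.update x i c') (W.erase i)).card := hsum
            _ = (Finset.univ.biUnion fun c' : Fin L =>
                cutP A (Function.update x i c') (W.erase i)).card := hcardbu.symm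
            _ ≤ (cutP A x W).card := Finset.card_le_card hbu
      · by_cases hb2 : ∃ c, Function.update x i c ∉ A ∧ Function.update y i c ∈ A
        · obtain ⟨c, hcN, hcA⟩ := hb2
          have hslice : (L-1) * m ≤ (cutP A (Function.update y i c) (W.erase i)).card := by
            have := IH (W.erase i) A (Function.update y i c) (Function.update x i c)
              (le_of_eq herase) hcA hcN (by
                intro k hk
                by_cases hki : k = i
                · subst hki; simp
                · rw [Function.update_of_ne hki, Function.update_of_ne hki]
                  exact (hxy k (fun h => hk (Finset.mem_erase.2 ⟨hki, h⟩))).symm)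
            rwa [herase] at this
          have hsub1 : cutP A (Function.update y i c) (W.erase i) ⊆ cutP A x W :=
            cutP_mono (lay_update hylay hiW c) heraseS
          have hline : L - 1 ≤ (lineCut A x i).card :=
            card_lineCut A x i ⟨x i, by rw [Function.update_eq_self]; exact hx⟩ ⟨c, hcN⟩
          have hsub2 : lineCut A x i ⊆ cutP A x W := lineCut_subset_cutP (lay_self x W) hiW
          have hdisj : Disjoint (cutP A (Function.update y i c) (W.erase i))
              (lineCut A x i) := by
            rw [Finset.disjoint_left]
            intro p hp hp'
            have h1 := (cutP_fst_coord hp (Finset.notMem_erase i W)).1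
            have h2 := (cutP_fst_coord hp (Finset.notMem_erase i W)).2
            exact (lineCut_spec hp').2.2.1 (by rw [h1, h2])
          calc (L-1) * W.card = (L-1)*m + (L-1) := by rw [hw]; ring
          _ ≤ (cutP A (Function.update y i c) (W.erase i)).card + (lineCut A x i).card :=
            add_le_add hslice hline
          _ ≤ (cutP A x W).card := two_disj_card hsub1 hsub2 hdisj
        · -- case beta3 : the two lines have identical membership patterns
          push_neg at hb1 hb2
          have hz : Function.update x i (y i) ∉ A := by
            intro hcon
            have := hb1 (y i) hcon
            rw [Function.update_eq_self] at this
            exact hy this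
          obtain ⟨j, hjW, hji⟩ := Finset.exists_mem_ne
            (by omega : 1 < W.card) i
          refine alpha x (Function.update x i (y i)) hx hz (lay_self x W)
            (lay_update (lay_self x W) hiW _) ?_ ⟨j, hjW, ?_⟩
          · intro k hk
            rw [Function.update_of_ne (by rintro rfl; exact hk hiW)]
          · rw [Function.update_of_ne hji]


noncomputable def cutAll (A : Set (V L n)) : Finset (V L n × V L n) :=
  Finset.univ.filter fun p => (hammingGraph L n).Adj p.1 p.2 ∧ p.1 ∈ A ∧ p.2 ∉ A

lemma cutP_subset_cutAll (A : Set (V L n)) (x : V L n) (W : Finset (Fin n)) :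
    cutP A x W ⊆ cutAll A := by
  intro p hp
  rw [mem_cutP] at hp
  simp only [cutAll, Finset.mem_filter, Finset.mem_univ, true_and]
  exact ⟨hp.1, hp.2.1, hp.2.2.1⟩

lemma card_layer (S : Finset (Fin n)) (z : V L n) :
    (Finset.univ.filter fun v : V L n => ∀ i ∈ S, v i = z i).card = L ^ (Sᶜ).card := by
  classical
  have e : {v : V L n // ∀ i ∈ S, v i = z i} ≃ (↥(Sᶜ) → Fin L) :=
    { toFun := fun v i => v.1 i
      invFun := fun g => ⟨fun i => if h : i ∈ Sᶜ then g ⟨i, h⟩ else z i, by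
        intro i hi
        show (if h : i ∈ Sᶜ then g ⟨i, h⟩ else z i) = z i
        exact dif_neg (by simpa using hi)⟩
      left_inv := fun v => Subtype.ext (funext fun i => by
        by_cases h : i ∈ Sᶜ
        · simp [h]
        · simp only [dif_neg h]
          exact (v.2 i (by simpa using h)).symm)
      right_inv := fun g => funext fun i => by simp }
  calc (Finset.univ.filter fun v : V L n => ∀ i ∈ S, v i = z i).card
      = Fintype.card {v : V L n // ∀ i ∈ S, v i = z i} := by
        rw [Fintype.card_subtype]
    _ = Fintype.card (↥(Sᶜ) → Fin L) := Fintype.card_congr e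
    _ = L ^ (Sᶜ).card := by
        rw [Fintype.card_fun, Fintype.card_fin, Fintype.card_coe]

/-- The main counting bound: if `A` contains a `t`-sublayer and avoids a `t`-sublayer,
then there are at least `(L-1)(n-t)L^t` crossing pairs. -/
lemma family_bound (hL : 2 ≤ L) {t : ℕ} (htn : t ≤ n)
    (A : Set (V L n)) (S S' : Finset (Fin n)) (z z' : V L n)
    (hS : S.card = n - t) (hS' : S'.card = n - t)
    (hX : ∀ v : V L n, (∀ i ∈ S, v i = z i) → v ∈ A)
    (hX' : ∀ v : V L n, (∀ i ∈ S', v i = z' i) → v ∉ A) :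
    (L - 1) * (n - t) * L ^ t ≤ (cutAll A).card := by
  classical
  have hnn : Fintype.card (Fin n) = n := Fintype.card_fin n
  have hT : (Sᶜ).card = t := by
    rw [Finset.card_compl, hnn, hS]; omega
  have hT' : (S'ᶜ).card = t := by
    rw [Finset.card_compl, hnn, hS']; omega
  set I : Finset (Fin n) := Sᶜ ∩ S'ᶜ with hI
  set D1 : Finset (Fin n) := Sᶜ \ I with hD1
  set D2 : Finset (Fin n) := S'ᶜ \ I with hD2
  have hD1card : D1.card = t - I.card := by
    rw [hD1, Finset.card_sdiff_of_subset (Finset.inter_subset_left), hT]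
  have hD2card : D2.card = t - I.card := by
    rw [hD2, Finset.card_sdiff_of_subset (Finset.inter_subset_right), hT']
  have hcardeq : D2.card = D1.card := by rw [hD1card, hD2card]
  have γ : ↥D2 ≃ ↥D1 := Finset.equivOfCardEq hcardeq
  -- basic coordinate facts
  have hD2S' : ∀ i ∈ D2, i ∉ S' := fun i hi => by
    have := Finset.mem_sdiff.1 hi
    simpa using this.1
  have hD2S : ∀ i ∈ D2, i ∈ S := fun i hi => by
    have h := Finset.mem_sdiff.1 hi
    by_contra hc
    exact h.2 (Finset.mem_inter.2 ⟨by simpa using hc, h.1⟩)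
  have hIS : ∀ i ∈ I, i ∉ S := fun i hi => by
    have := (Finset.mem_inter.1 hi).1; simpa using this
  have hIS' : ∀ i ∈ I, i ∉ S' := fun i hi => by
    have := (Finset.mem_inter.1 hi).2; simpa using this
  have hcover : ∀ i : Fin n, i ∉ S → i ∉ I → i ∈ D1 := fun i h1 h2 =>
    Finset.mem_sdiff.2 ⟨by simpa using h1, h2⟩
  have hD1S : ∀ i ∈ D1, i ∉ S := fun i hi => by
    have := (Finset.mem_sdiff.1 hi).1; simpa using this
  -- the layer Finset
  set Xf : Finset (V L n) := Finset.univ.filter (fun v => ∀ i ∈ S, v i = z i) with hXf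
  have hXfA : ∀ u ∈ Xf, ∀ i ∈ S, u i = z i := fun u hu => (Finset.mem_filter.1 hu).2
  have hXfcard : Xf.card = L ^ t := by rw [hXf, card_layer, hT]
  -- the dichotomy predicate
  set P : V L n → Prop := fun u => ∀ u' : V L n, (∀ i ∈ S, u' i = z i) →
    (∀ i ∈ I, u' i = u i) → ∃ yv, yv ∈ lay u' S ∧ yv ∉ A with hP
  set Xg : Finset (V L n) := Xf.filter P with hXg
  set Xb : Finset (V L n) := Xf.filter (fun u => ¬ P u) with hXb
  -- choice of a fully-inside fiber witness for bad u
  have hbadchoice : ∀ u : V L n, ∃ u₀ : V L n, u ∈ Xb →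
      (∀ i ∈ S, u₀ i = z i) ∧ (∀ i ∈ I, u₀ i = u i) ∧ ∀ yv ∈ lay u₀ S, yv ∈ A := by
    intro u
    by_cases h : u ∈ Xb
    · have hnp : ¬ P u := (Finset.mem_filter.1 h).2
      rw [hP] at hnp
      obtain ⟨u₀, hnp⟩ := not_forall.1 hnp
      obtain ⟨h1, hnp⟩ := Classical.not_imp.1 hnp
      obtain ⟨h2, hnp⟩ := Classical.not_imp.1 hnp
      have h3 : ∀ yv ∈ lay u₀ S, yv ∈ A := by
        intro yv hyv
        by_contra hc
        exact hnp ⟨yv, hyv, hc⟩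
      exact ⟨u₀, fun _ => ⟨h1, h2, h3⟩⟩
    · exact ⟨u, fun h' => absurd h' h⟩
  choose u₀f hu₀f using hbadchoice
  -- the base point of the "bad" piece for u
  set xptf : V L n → V L n := fun u i =>
    if h : i ∈ D2 then u ((γ ⟨i, h⟩ : ↥D1) : Fin n) else u₀f u i with hxptf
  -- the bad piece's non-A point
  set yptf : V L n → V L n := fun u i =>
    if h : i ∈ D2 then u ((γ ⟨i, h⟩ : ↥D1) : Fin n)
    else if i ∈ I then u i else z' i with hyptf
  -- properties
  have hxpt_lay : ∀ u ∈ Xb, xptf u ∈ lay (u₀f u) S := by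
    intro u hu i hiS
    rw [hxptf]
    simp only
    rw [dif_neg (fun hd => hiS (hD2S i hd))]
  have hxptA : ∀ u ∈ Xb, xptf u ∈ A := fun u hu =>
    (hu₀f u hu).2.2 _ (hxpt_lay u hu)
  have hyptA : ∀ u : V L n, yptf u ∉ A := by
    intro u
    apply hX'
    intro i hiS'
    rw [hyptf]
    simp only
    rw [dif_neg (fun hd => hD2S' i hd hiS'), if_neg (fun hi => hIS' i hi hiS')]
  have hagree_bad : ∀ u ∈ Xb, ∀ i, i ∉ S' → xptf u i = yptf u i := by
    intro u hu i hiS'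
    rw [hxptf, hyptf]
    simp only
    by_cases hd : i ∈ D2
    · rw [dif_pos hd, dif_pos hd]
    · rw [dif_neg hd, dif_neg hd]
      have hiT' : i ∈ S'ᶜ := by simpa using hiS'
      have hiI : i ∈ I := by
        by_contra hc
        exact hd (Finset.mem_sdiff.2 ⟨hiT', hc⟩)
      rw [if_pos hiI]
      exact (hu₀f u hu).2.1 i hiI
  -- piece definitions
  set gp : V L n → Finset (V L n × V L n) := fun u => cutP A u S with hgp
  set bp : V L n → Finset (V L n × V L n) := fun u => cutP A (xptf u) S' with hbp
  -- cardinality of each piece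
  have hgpcard : ∀ u ∈ Xg, (L - 1) * (n - t) ≤ (gp u).card := by
    intro u hu
    have huf : u ∈ Xf := (Finset.mem_filter.1 hu).1
    have hPu : P u := (Finset.mem_filter.1 hu).2
    obtain ⟨yv, hyvlay, hyvA⟩ := hPu u (hXfA u huf) (fun _ _ => rfl)
    have := L0 hL S.card S A u yv le_rfl (hX u (hXfA u huf)) hyvA
      (fun i hi => (hyvlay i hi).symm)
    rw [hgp]
    calc (L-1) * (n-t) = (L-1) * S.card := by rw [hS]
    _ ≤ (cutP A u S).card := this
  have hbpcard : ∀ u ∈ Xb, (L - 1) * (n - t) ≤ (bp u).card := by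
    intro u hu
    have := L0 hL S'.card S' A (xptf u) (yptf u) le_rfl (hxptA u hu) (hyptA u)
      (hagree_bad u hu)
    rw [hbp]
    calc (L-1) * (n-t) = (L-1) * S'.card := by rw [hS']
    _ ≤ (cutP A (xptf u) S').card := this
  -- membership facts used for disjointness
  have hgplay : ∀ u, ∀ p ∈ gp u, ∀ i, i ∉ S → p.1 i = u i := by
    intro u p hp i hi
    exact (cutP_fst_coord hp hi).1
  have hbplay : ∀ u, ∀ p ∈ bp u, ∀ i, i ∉ S' → p.1 i = xptf u i := by
    intro u p hp i hi
    exact (cutP_fst_coord hp hi).1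
  -- difference off S for distinct members of Xf
  have hXfdiff : ∀ u ∈ Xf, ∀ u' ∈ Xf, u ≠ u' → ∃ i, i ∉ S ∧ u i ≠ u' i := by
    intro u hu u' hu' hne
    by_contra hc
    push_neg at hc
    apply hne
    funext i
    by_cases hi : i ∈ S
    · rw [hXfA u hu i hi, hXfA u' hu' i hi]
    · exact hc i hi
  -- good pieces pairwise disjoint
  have hgg : ∀ u ∈ Xg, ∀ u' ∈ Xg, u ≠ u' → Disjoint (gp u) (gp u') := by
    intro u hu u' hu' hne
    obtain ⟨i, hiS, hiu⟩ := hXfdiff u (Finset.mem_filter.1 hu).1 u'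
      (Finset.mem_filter.1 hu').1 hne
    rw [Finset.disjoint_left]
    intro p hp hp'
    exact hiu ((hgplay u p hp i hiS) ▸ (hgplay u' p hp' i hiS) ▸ rfl)
  -- bad pieces pairwise disjoint
  have hbb : ∀ u ∈ Xb, ∀ u' ∈ Xb, u ≠ u' → Disjoint (bp u) (bp u') := by
    intro u hu u' hu' hne
    rw [Finset.disjoint_left]
    intro p hp hp'
    -- derive u = u'
    apply hne
    funext i
    by_cases hiS : i ∈ S
    · rw [hXfA u (Finset.mem_filter.1 hu).1 i hiS,
        hXfA u' (Finset.mem_filter.1 hu').1 i hiS]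
    · by_cases hiI : i ∈ I
      · have h1 := hbplay u p hp i (hIS' i hiI)
        have h2 := hbplay u' p hp' i (hIS' i hiI)
        have e1 : xptf u i = u i := by
          rw [hxptf]; simp only
          rw [dif_neg (fun hd => (Finset.mem_sdiff.1 hd).2 hiI)]
          exact (hu₀f u hu).2.1 i hiI
        have e2 : xptf u' i = u' i := by
          rw [hxptf]; simp only
          rw [dif_neg (fun hd => (Finset.mem_sdiff.1 hd).2 hiI)]
          exact (hu₀f u' hu').2.1 i hiI
        rw [← e1, ← h1, h2, e2]
      · -- i ∈ D1 : use the matching coordinate in D2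
        have hiD1 : i ∈ D1 := hcover i hiS hiI
        set jsub : ↥D2 := γ.symm ⟨i, hiD1⟩ with hjsub
        have hj : (jsub : Fin n) ∈ D2 := jsub.2
        have hγj : γ ⟨(jsub : Fin n), hj⟩ = ⟨i, hiD1⟩ := by
          have heta : (⟨(jsub : Fin n), hj⟩ : ↥D2) = jsub := Subtype.ext rfl
          rw [heta, hjsub, Equiv.apply_symm_apply]
        have h1 := hbplay u p hp (jsub : Fin n) (hD2S' _ hj)
        have h2 := hbplay u' p hp' (jsub : Fin n) (hD2S' _ hj)
        have e1 : xptf u (jsub : Fin n) = u i := by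
          rw [hxptf]; simp only
          rw [dif_pos hj, hγj]
        have e2 : xptf u' (jsub : Fin n) = u' i := by
          rw [hxptf]; simp only
          rw [dif_pos hj, hγj]
        rw [← e1, ← h1, h2, e2]
  -- good vs bad pieces disjoint
  have hgb : ∀ u ∈ Xg, ∀ u' ∈ Xb, Disjoint (gp u) (bp u') := by
    intro u hu u' hu'
    have hPu : P u := (Finset.mem_filter.1 hu).2
    have hnPu' : ¬ P u' := (Finset.mem_filter.1 hu').2
    have hIne : ∃ i ∈ I, u i ≠ u' i := by
      by_contra hc
      push_neg at hc
      apply hnPu'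
      rw [hP]
      intro u'' h1 h2
      exact hPu u'' h1 (fun i hi => by rw [h2 i hi, ← hc i hi])
    obtain ⟨i, hiI, hiu⟩ := hIne
    rw [Finset.disjoint_left]
    intro p hp hp'
    have h1 := hgplay u p hp i (hIS i hiI)
    have h2 := hbplay u' p hp' i (hIS' i hiI)
    have e2 : xptf u' i = u' i := by
      rw [hxptf]; simp only
      rw [dif_neg (fun hd => (Finset.mem_sdiff.1 hd).2 hiI)]
      exact (hu₀f u' hu').2.1 i hiI
    exact hiu (by rw [← h1, h2, e2])
  -- assemble
  have hgsub : Xg.biUnion gp ⊆ cutAll A := by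
    intro p hp
    obtain ⟨u, _, hp⟩ := Finset.mem_biUnion.1 hp
    exact cutP_subset_cutAll A u S hp
  have hbsub : Xb.biUnion bp ⊆ cutAll A := by
    intro p hp
    obtain ⟨u, hu, hp⟩ := Finset.mem_biUnion.1 hp
    exact cutP_subset_cutAll A (xptf u) S' hp
  have hdisjGB : Disjoint (Xg.biUnion gp) (Xb.biUnion bp) := by
    rw [Finset.disjoint_left]
    intro p hp hp'
    obtain ⟨u, hu, hp⟩ := Finset.mem_biUnion.1 hp
    obtain ⟨u', hu', hp'⟩ := Finset.mem_biUnion.1 hp'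
    exact (Finset.disjoint_left.1 (hgb u hu u' hu')) hp hp'
  have hgcard : Xg.card * ((L-1) * (n-t)) ≤ (Xg.biUnion gp).card := by
    rw [Finset.card_biUnion hgg]
    calc Xg.card * ((L-1)*(n-t)) = Xg.card • ((L-1)*(n-t)) := by rw [smul_eq_mul]
    _ ≤ ∑ u ∈ Xg, (gp u).card := Finset.card_nsmul_le_sum _ _ _ hgpcard
  have hbcard : Xb.card * ((L-1) * (n-t)) ≤ (Xb.biUnion bp).card := by
    rw [Finset.card_biUnion hbb]
    calc Xb.card * ((L-1)*(n-t)) = Xb.card • ((L-1)*(n-t)) := by rw [smul_eq_mul]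
    _ ≤ ∑ u ∈ Xb, (bp u).card := Finset.card_nsmul_le_sum _ _ _ hbpcard
  have hsplitcard : Xg.card + Xb.card = Xf.card := by
    rw [hXg, hXb]
    exact Finset.card_filter_add_card_filter_not _
  calc (L-1) * (n-t) * L ^ t = L ^ t * ((L-1) * (n-t)) := by ring
  _ = (Xg.card + Xb.card) * ((L-1) * (n-t)) := by rw [hsplitcard, hXfcard]
  _ = Xg.card * ((L-1)*(n-t)) + Xb.card * ((L-1)*(n-t)) := by ring
  _ ≤ (Xg.biUnion gp).card + (Xb.biUnion bp).card := add_le_add hgcard hbcard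
  _ ≤ (cutAll A).card := two_disj_card hgsub hbsub hdisjGB


lemma lower_bound (hL : 2 ≤ L) {t : ℕ} (htn : t ≤ n)
    (F : Finset (Sym2 (V L n)))
    (hdis : ¬((hammingGraph L n).deleteEdges ↑F).Connected)
    (hcomp : ∀ C : ((hammingGraph L n).deleteEdges ↑F).ConnectedComponent,
      ∃ X, IsSubLayer L n t X ∧ X ⊆ C.supp) :
    (L - 1) * (n - t) * L ^ t ≤ F.card := by
  classical
  set G' := (hammingGraph L n).deleteEdges ↑F with hG'
  have hVne : Nonempty (V L n) := ⟨fun _ => ⟨0, by omega⟩⟩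
  have hpre : ¬ G'.Preconnected := by
    intro hp
    exact hdis ⟨hp⟩
  rw [SimpleGraph.Preconnected] at hpre
  obtain ⟨v1, hv1⟩ := not_forall.1 hpre
  obtain ⟨v2, hnr⟩ := not_forall.1 hv1
  set C1 := G'.connectedComponentMk v1 with hC1
  set C2 := G'.connectedComponentMk v2 with hC2
  have hC12 : C1 ≠ C2 := fun h => hnr (SimpleGraph.ConnectedComponent.exact h)
  set A : Set (V L n) := C1.supp with hA
  obtain ⟨X1, ⟨S, z, hScard, hX1eq⟩, hX1sub⟩ := hcomp C1
  obtain ⟨X2, ⟨S', z', hS'card, hX2eq⟩, hX2sub⟩ := hcomp C2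
  have hX : ∀ v : V L n, (∀ i ∈ S, v i = z i) → v ∈ A := by
    intro v hv
    exact hX1sub (by rw [hX1eq]; exact hv)
  have hX' : ∀ v : V L n, (∀ i ∈ S', v i = z' i) → v ∉ A := by
    intro v hv hvA
    have h2 : v ∈ C2.supp := hX2sub (by rw [hX2eq]; exact hv)
    rw [SimpleGraph.ConnectedComponent.mem_supp_iff] at h2
    rw [hA, SimpleGraph.ConnectedComponent.mem_supp_iff] at hvA
    exact hC12 (by rw [← hvA, ← h2])
  have hcut := family_bound hL htn A S S' z z' hScard hS'card hX hX'
  -- now inject the crossing pairs into F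
  have hmaps : ∀ p ∈ cutAll A, Sym2.mk p.1 p.2 ∈ F := by
    intro p hp
    simp only [cutAll, Finset.mem_filter, Finset.mem_univ, true_and] at hp
    obtain ⟨hadj, hpA, hpN⟩ := hp
    by_contra hc
    have hadj' : G'.Adj p.1 p.2 := by
      rw [hG', SimpleGraph.deleteEdges_adj]
      exact ⟨hadj, by simpa using hc⟩
    have := hadj'.reachable
    have hmk : G'.connectedComponentMk p.1 = G'.connectedComponentMk p.2 :=
      SimpleGraph.ConnectedComponent.sound this
    rw [hA, SimpleGraph.ConnectedComponent.mem_supp_iff] at hpA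
    apply hpN
    rw [hA, SimpleGraph.ConnectedComponent.mem_supp_iff]
    rw [← hmk, hpA]
  have hinj : Set.InjOn (fun p : V L n × V L n => Sym2.mk p.1 p.2) ↑(cutAll A) := by
    intro p hp q hq he
    simp only [Finset.coe_filter, cutAll, Set.mem_setOf_eq] at hp hq
    have := Sym2.mk_eq_mk_iff.1 he
    rcases this with h | h
    · exact h
    · exfalso
      have h1 : p.1 = q.2 := by rw [h]; rfl
      exact (hq.2.2.2) (h1 ▸ hp.2.2.1)
  calc (L - 1) * (n - t) * L ^ t ≤ (cutAll A).card := hcut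
  _ ≤ F.card := Finset.card_le_card_of_injOn _ hmaps hinj


lemma adj_structure {a b : V L n} (h : (hammingGraph L n).Adj a b) :
    ∃ i : Fin n, a i ≠ b i ∧ b = Function.update a i (b i) := by
  obtain ⟨hne, huniq⟩ := h
  obtain ⟨i, hi⟩ : ∃ i, a i ≠ b i := by
    by_contra hc; push_neg at hc; exact hne (funext hc)
  refine ⟨i, hi, funext fun k => ?_⟩
  by_cases hk : k = i
  · subst hk; simp
  · rw [Function.update_of_ne hk]
    by_contra hc
    exact hk (huniq k i (fun h => hc h.symm) hi)

section Upper

variable (L n t : ℕ)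

def zeroV (hL : 2 ≤ L) : V L n := fun _ => ⟨0, by omega⟩

noncomputable def Sfix : Finset (Fin n) := Finset.univ.filter (fun i : Fin n => t ≤ i.val)

lemma Sfix_card (htn : t ≤ n) : (Sfix n t).card = n - t := by
  classical
  have e : {i : Fin n // t ≤ i.val} ≃ Fin (n - t) :=
    { toFun := fun i => ⟨i.1.val - t, by omega⟩
      invFun := fun j => ⟨⟨j.val + t, by omega⟩, by simp⟩
      left_inv := fun i => by
        apply Subtype.ext
        apply Fin.ext
        simp
        omega
      right_inv := fun j => by
        apply Fin.ext
        simp }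
  calc (Sfix n t).card = Fintype.card {i : Fin n // t ≤ i.val} :=
        (Fintype.card_subtype _).symm
  _ = Fintype.card (Fin (n - t)) := Fintype.card_congr e
  _ = n - t := Fintype.card_fin _

lemma Sfix_compl_card (htn : t ≤ n) : ((Sfix n t)ᶜ).card = t := by
  rw [Finset.card_compl, Sfix_card n t htn, Fintype.card_fin]
  omega

end Upper

section UpperMain

variable {L n t : ℕ} (hL : 2 ≤ L) (hn : 1 ≤ n) (ht : t ≤ n - 1)

-- everything for the explicit cut
set_option maxHeartbeats 2000000 in
lemma upper_bound (hL : 2 ≤ L) (hn : 1 ≤ n) (ht : t ≤ n - 1) :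
    ∃ F : Finset (Sym2 (V L n)),
    ↑F ⊆ (hammingGraph L n).edgeSet ∧
    ¬((hammingGraph L n).deleteEdges ↑F).Connected ∧
    (∀ C : ((hammingGraph L n).deleteEdges ↑F).ConnectedComponent,
      ∃ X, IsSubLayer L n t X ∧ X ⊆ C.supp) ∧
    F.card = (L - 1) * (n - t) * L ^ t := by
  classical
  have htn : t ≤ n := by omega
  set z0 : Fin L := ⟨0, by omega⟩ with hz0
  set o1 : Fin L := ⟨1, by omega⟩ with ho1
  have hz1 : o1 ≠ z0 := by
    intro h
    have := congrArg Fin.val h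
    simp [hz0, ho1] at this
  set zv : V L n := fun _ => z0 with hzv
  set S : Finset (Fin n) := Sfix n t with hSdef
  set istar : Fin n := ⟨n - 1, by omega⟩ with histar
  have histarS : istar ∈ S := by
    rw [hSdef, Sfix]
    simp [histar]
    omega
  set wv : V L n := Function.update zv istar o1 with hwv
  set X0 : V L n → Prop := fun v => ∀ i ∈ S, v i = z0 with hX0
  have hzX0 : X0 zv := fun i _ => rfl
  have hwX0 : ¬ X0 wv := by
    intro h
    have := h istar histarS
    rw [hwv, Function.update_self] at this
    exact hz1 this
  -- the cut pairs
  set CP : Finset (V L n × V L n) := Finset.univ.filter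
    (fun p => (hammingGraph L n).Adj p.1 p.2 ∧ X0 p.1 ∧ ¬ X0 p.2) with hCP
  set F : Finset (Sym2 (V L n)) := CP.image (fun p => Sym2.mk p.1 p.2) with hF
  -- membership characterization of F
  have hFmem : ∀ a b : V L n, s(a, b) ∈ F ↔
      ((hammingGraph L n).Adj a b ∧ ((X0 a ∧ ¬ X0 b) ∨ (X0 b ∧ ¬ X0 a))) := by
    intro a b
    constructor
    · intro h
      rw [hF, Finset.mem_image] at h
      obtain ⟨p, hp, hpe⟩ := h
      obtain ⟨p1, p2⟩ := p
      rw [hCP, Finset.mem_filter] at hp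
      obtain ⟨-, hadj, h1, h2⟩ := hp
      rcases (Sym2.mk_eq_mk_iff (q := (a, b))).1 hpe with h | h
      · have e1 : p1 = a := congrArg Prod.fst h
        have e2 : p2 = b := congrArg Prod.snd h
        subst e1; subst e2
        exact ⟨hadj, Or.inl ⟨h1, h2⟩⟩
      · have e1 : p1 = b := congrArg Prod.fst h
        have e2 : p2 = a := congrArg Prod.snd h
        subst e1; subst e2
        exact ⟨hadj.symm, Or.inr ⟨h1, h2⟩⟩
    · intro ⟨hadj, h⟩
      rcases h with ⟨h1, h2⟩ | ⟨h1, h2⟩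
      · rw [hF, Finset.mem_image]
        exact ⟨(a, b), by rw [hCP, Finset.mem_filter]; exact ⟨Finset.mem_univ _, hadj, h1, h2⟩, rfl⟩
      · rw [hF, Finset.mem_image]
        refine ⟨(b, a), by rw [hCP, Finset.mem_filter]; exact ⟨Finset.mem_univ _, hadj.symm, h1, h2⟩, ?_⟩
        exact Sym2.eq_swap
  set G' := (hammingGraph L n).deleteEdges ↑F with hG'
  -- edges with both ends on the same side survive
  have hstep : ∀ a b : V L n, (hammingGraph L n).Adj a b → (X0 a ↔ X0 b) → G'.Adj a b := by
    intro a b hadj hiff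
    rw [hG', SimpleGraph.deleteEdges_adj]
    refine ⟨hadj, ?_⟩
    intro hmem
    have := (hFmem a b).1 (by simpa using hmem)
    rcases this.2 with ⟨h1, h2⟩ | ⟨h1, h2⟩
    · exact h2 (hiff.1 h1)
    · exact h2 (hiff.2 h1)
  -- deleted-graph adjacency preserves the side
  have hside : ∀ a b : V L n, G'.Adj a b → (X0 a ↔ X0 b) := by
    intro a b hadj
    rw [hG', SimpleGraph.deleteEdges_adj] at hadj
    obtain ⟨hadj, hnF⟩ := hadj
    constructor
    · intro h1
      by_contra h2
      exact hnF (by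
        have := (hFmem a b).2 ⟨hadj, Or.inl ⟨h1, h2⟩⟩
        simpa using this)
    · intro h1
      by_contra h2
      exact hnF (by
        have := (hFmem a b).2 ⟨hadj, Or.inr ⟨h1, h2⟩⟩
        simpa using this)
  have hreach_side : ∀ a b : V L n, G'.Reachable a b → (X0 a ↔ X0 b) := by
    intro a b hr
    obtain ⟨w⟩ := hr
    induction w with
    | nil => exact Iff.rfl
    | cons h p ih => exact (hside _ _ h).trans ih
  -- box reachability: if all coordinatewise mixtures of u,u' lie on one side, reachable
  have hbox : ∀ (m : ℕ) (u u' : V L n),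
      (Finset.univ.filter (fun i => u i ≠ u' i)).card ≤ m →
      (∀ v : V L n, (∀ i, v i = u i ∨ v i = u' i) → (X0 v ↔ X0 u)) →
      G'.Reachable u u' := by
    intro m
    induction m with
    | zero =>
      intro u u' hc _
      have : u = u' := by
        funext i
        by_contra hne
        have : i ∈ Finset.univ.filter (fun i => u i ≠ u' i) := by simp [hne]
        have h0 : (Finset.univ.filter (fun i : Fin n => u i ≠ u' i)).card = 0 := by omega
        rw [Finset.card_eq_zero] at h0
        rw [h0] at this
        simp at this
      rw [this]
    | succ m ih =>
      intro u u' hc hbx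
      by_cases hcm : (Finset.univ.filter (fun i => u i ≠ u' i)).card ≤ m
      · exact ih u u' hcm hbx
      have hne0 : (Finset.univ.filter (fun i => u i ≠ u' i)).Nonempty := by
        rw [← Finset.card_pos]; omega
      obtain ⟨i, hi⟩ := hne0
      have hiu : u i ≠ u' i := (Finset.mem_filter.1 hi).2
      set u2 : V L n := Function.update u i (u' i) with hu2
      have hmix : ∀ k, u2 k = u k ∨ u2 k = u' k := by
        intro k
        by_cases hk : k = i
        · subst hk; right; rw [hu2, Function.update_self]
        · left; rw [hu2, Function.update_of_ne hk]
      have hX0u2 : X0 u2 ↔ X0 u := hbx u2 hmix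
      have hadj : G'.Adj u u2 := by
        apply hstep
        · rw [hu2]; exact adj_update (Ne.symm hiu)
        · exact hX0u2.symm
      have hcard2 : (Finset.univ.filter (fun k => u2 k ≠ u' k)).card ≤ m := by
        have hss : Finset.univ.filter (fun k => u2 k ≠ u' k) ⊆
            (Finset.univ.filter (fun k => u k ≠ u' k)).erase i := by
          intro k hk
          have hk2 := (Finset.mem_filter.1 hk).2
          rw [Finset.mem_erase]
          constructor
          · intro hke
            subst hke
            rw [hu2, Function.update_self] at hk2
            exact hk2 rfl
          · rw [Finset.mem_filter]
            refine ⟨Finset.mem_univ _, ?_⟩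
            intro hcon
            rw [hu2] at hk2
            by_cases hke : k = i
            · subst hke; rw [Function.update_self] at hk2; exact hk2 rfl
            · rw [Function.update_of_ne hke] at hk2; exact hk2 hcon
        calc (Finset.univ.filter (fun k => u2 k ≠ u' k)).card
            ≤ ((Finset.univ.filter (fun k => u k ≠ u' k)).erase i).card :=
              Finset.card_le_card hss
        _ = (Finset.univ.filter (fun k => u k ≠ u' k)).card - 1 :=
              Finset.card_erase_of_mem hi
        _ ≤ m := by omega
      have hbx2 : ∀ v : V L n, (∀ k, v k = u2 k ∨ v k = u' k) → (X0 v ↔ X0 u2) := by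
        intro v hv
        have : ∀ k, v k = u k ∨ v k = u' k := by
          intro k
          rcases hv k with h | h
          · rcases hmix k with h2 | h2
            · left; rw [h, h2]
            · right; rw [h, h2]
          · right; exact h
        exact (hbx v this).trans hX0u2.symm
      exact hadj.reachable.trans (ih u2 u' hcard2 hbx2)
  -- reachability inside X0
  have hreachX0 : ∀ u u' : V L n, X0 u → X0 u' → G'.Reachable u u' := by
    intro u u' hu hu'
    apply hbox (Finset.univ.filter (fun i => u i ≠ u' i)).card u u' le_rfl
    intro v hv
    have : X0 v := by
      intro k hk
      rcases hv k with h | h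
      · rw [h]; exact hu k hk
      · rw [h]; exact hu' k hk
    constructor <;> intro _
    · exact hu
    · exact this
  -- reachability inside the complement
  have hreachC : ∀ u u' : V L n, ¬ X0 u → ¬ X0 u' → G'.Reachable u u' := by
    have honeside : ∀ u u' : V L n, u istar = o1 → u' istar = o1 → G'.Reachable u u' := by
      intro u u' hu hu'
      apply hbox (Finset.univ.filter (fun i => u i ≠ u' i)).card u u' le_rfl
      intro v hv
      have hvnot : ¬ X0 v := by
        intro hvX
        have := hvX istar histarS
        rcases hv istar with h | h
        · rw [h, hu] at this; exact hz1 this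
        · rw [h, hu'] at this; exact hz1 this
      have hunot : ¬ X0 u := by
        intro huX
        have := huX istar histarS
        rw [hu] at this; exact hz1 this
      constructor <;> intro h
      · exact absurd h hvnot
      · exact absurd h hunot
    have hlift : ∀ u : V L n, ¬ X0 u → G'.Reachable u (Function.update u istar o1) := by
      intro u hu
      by_cases he : u istar = o1
      · have : Function.update u istar o1 = u := by
          rw [← he, Function.update_eq_self]
        rw [this]
      · have hadj : G'.Adj u (Function.update u istar o1) := by
          apply hstep
          · exact adj_update (fun h => he h.symm)
          · constructor
            · intro h; exact absurd h hu
            · intro h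
              have := h istar histarS
              rw [Function.update_self] at this
              exact absurd this hz1
        exact hadj.reachable
    intro u u' hu hu'
    refine (hlift u hu).trans (SimpleGraph.Reachable.trans ?_ (hlift u' hu').symm)
    apply honeside
    · rw [Function.update_self]
    · rw [Function.update_self]
  refine ⟨F, ?_, ?_, ?_, ?_⟩
  · -- F ⊆ edgeSet
    intro e he
    have he' : e ∈ F := he
    rw [hF, Finset.mem_image] at he'
    obtain ⟨p, hp, hpe⟩ := he'
    rw [hCP, Finset.mem_filter] at hp
    rw [← hpe]
    exact hp.2.1
  · -- not connected
    intro hconn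
    have := hreach_side zv wv (hconn.preconnected zv wv)
    exact hwX0 (this.1 hzX0)
  · -- every component contains a sublayer
    intro C
    obtain ⟨v, hv⟩ := C.exists_rep
    by_cases hvX : X0 v
    · refine ⟨{x | ∀ i ∈ S, x i = zv i}, ⟨S, zv, by rw [hSdef, Sfix_card n t htn], rfl⟩, ?_⟩
      intro u hu
      have huX : X0 u := by
        intro k hk
        exact hu k hk
      rw [SimpleGraph.ConnectedComponent.mem_supp_iff, ← hv]
      exact SimpleGraph.ConnectedComponent.sound (hreachX0 u v huX hvX)
    · refine ⟨{x | ∀ i ∈ S, x i = wv i}, ⟨S, wv, by rw [hSdef, Sfix_card n t htn], rfl⟩, ?_⟩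
      intro u hu
      have huX : ¬ X0 u := by
        intro huX0
        have h1 := huX0 istar histarS
        have h2 := hu istar histarS
        rw [hwv, Function.update_self] at h2
        rw [h2] at h1
        exact hz1 h1
      rw [SimpleGraph.ConnectedComponent.mem_supp_iff, ← hv]
      exact SimpleGraph.ConnectedComponent.sound (hreachC u v huX hvX)
  · -- cardinality
    have hinj2 : Set.InjOn (fun p : V L n × V L n => Sym2.mk p.1 p.2)
        (↑CP : Set (V L n × V L n)) := by
      intro p hp q hq he
      rw [Finset.mem_coe, hCP, Finset.mem_filter] at hp hq
      rcases Sym2.mk_eq_mk_iff.1 he with h | h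
      · exact h
      · exfalso
        have h1 : p.1 = q.2 := congrArg Prod.fst h
        exact hq.2.2.2 (h1 ▸ hp.2.2.1)
    have hFcard : F.card = CP.card := by
      rw [hF]
      exact Finset.card_image_of_injOn hinj2
    -- CP is the image of the triples
    set X0f : Finset (V L n) := Finset.univ.filter (fun v => ∀ i ∈ S, v i = z0) with hX0f
    set Bf : Finset (Fin L) := Finset.univ.filter (fun b : Fin L => b ≠ z0) with hBf
    set Tr : Finset ((V L n) × (Fin n) × (Fin L)) := X0f ×ˢ (S ×ˢ Bf) with hTr
    set fmap : (V L n) × (Fin n) × (Fin L) → (V L n) × (V L n) :=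
      fun q => (q.1, Function.update q.1 q.2.1 q.2.2) with hfmap
    have himg : CP = Tr.image fmap := by
      apply Finset.ext
      intro p
      constructor
      · intro hp
        rw [hCP, Finset.mem_filter] at hp
        obtain ⟨-, hadj, h1, h2⟩ := hp
        obtain ⟨i, hine, hupd⟩ := adj_structure hadj
        rw [Finset.mem_image]
        refine ⟨(p.1, i, p.2 i), ?_, ?_⟩
        · rw [hTr, Finset.mem_product]
          refine ⟨by rw [hX0f]; simp only [Finset.mem_filter]; exact ⟨Finset.mem_univ _, h1⟩, ?_⟩
          rw [Finset.mem_product]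
          have hiS : i ∈ S ∧ p.2 i ≠ z0 := by
            by_cases hiS : i ∈ S
            · refine ⟨hiS, ?_⟩
              intro hz
              apply h2
              intro k hk
              by_cases hki : k = i
              · subst hki; exact hz
              · rw [hupd, Function.update_of_ne hki]
                exact h1 k hk
            · exfalso
              apply h2
              intro k hk
              by_cases hki : k = i
              · subst hki; exact absurd hk hiS
              · rw [hupd, Function.update_of_ne hki]
                exact h1 k hk
          exact ⟨hiS.1, by rw [hBf]; simp only [Finset.mem_filter]; exact ⟨Finset.mem_univ _, hiS.2⟩⟩
        · rw [hfmap]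
          simp only
          rw [← hupd]
      · intro hp
        rw [Finset.mem_image] at hp
        obtain ⟨⟨u, i, b⟩, hq, hqe⟩ := hp
        rw [hTr, Finset.mem_product] at hq
        obtain ⟨hu, hq2⟩ := hq
        rw [Finset.mem_product] at hq2
        obtain ⟨hiS, hb⟩ := hq2
        rw [hX0f, Finset.mem_filter] at hu
        rw [hBf, Finset.mem_filter] at hb
        rw [hCP, Finset.mem_filter]
        rw [← hqe]
        refine ⟨Finset.mem_univ _, ?_, ?_, ?_⟩
        · rw [hfmap]
          simp only
          apply adj_update
          intro hcon
          exact hb.2 (hcon.trans (hu.2 i hiS))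
        · exact hu.2
        · rw [hfmap]
          simp only
          intro hcon
          have := hcon i hiS
          rw [Function.update_self] at this
          exact hb.2 this
    have hfinj : Set.InjOn fmap ↑Tr := by
      intro q hq q' hq' he
      rw [Finset.mem_coe, hTr, Finset.mem_product] at hq hq'
      have e1 : q.1 = q'.1 := by
        have h0 := congrArg Prod.fst he
        rw [hfmap] at h0
        exact h0
      have e2 : Function.update q.1 q.2.1 q.2.2 = Function.update q'.1 q'.2.1 q'.2.2 := by
        have h0 := congrArg Prod.snd he
        rw [hfmap] at h0
        exact h0
      have hqS : q.2.1 ∈ S := (Finset.mem_product.1 hq.2).1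
      have hq'S : q'.2.1 ∈ S := (Finset.mem_product.1 hq'.2).1
      have hqb : q.2.2 ≠ z0 := by
        have := (Finset.mem_product.1 hq.2).2
        rw [hBf, Finset.mem_filter] at this
        exact this.2
      have hq'b : q'.2.2 ≠ z0 := by
        have := (Finset.mem_product.1 hq'.2).2
        rw [hBf, Finset.mem_filter] at this
        exact this.2
      have hu1 : ∀ i ∈ S, q.1 i = z0 := by
        have := hq.1; rw [hX0f, Finset.mem_filter] at this; exact this.2
      have hieq : q.2.1 = q'.2.1 := by
        by_contra hcon
        have h1 := congrFun e2 q.2.1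
        rw [Function.update_self, ← e1, Function.update_of_ne hcon] at h1
        exact hqb (by rw [h1]; exact hu1 _ hqS)
      have hbeq : q.2.2 = q'.2.2 := by
        have h1 := congrFun e2 q.2.1
        rw [Function.update_self, hieq, Function.update_self] at h1
        exact h1
      exact Prod.ext e1 (Prod.ext hieq hbeq)
    have hX0fcard : X0f.card = L ^ t := by
      have h1 : X0f.card = L ^ (Sᶜ).card := card_layer (L := L) (n := n) S (fun _ => z0)
      rw [h1, hSdef, Sfix_compl_card n t htn]
    have hBfcard : Bf.card = L - 1 := by
      rw [hBf, Finset.filter_ne', Finset.card_erase_of_mem (Finset.mem_univ _),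
        Finset.card_univ, Fintype.card_fin]
    have hScard2 : S.card = n - t := by rw [hSdef, Sfix_card n t htn]
    have hTrcard : Tr.card = (L ^ t) * ((n - t) * (L - 1)) := by
      rw [hTr, Finset.card_product, Finset.card_product, hX0fcard, hScard2, hBfcard]
    rw [hFcard, himg, Finset.card_image_of_injOn hfinj, hTrcard]
    ring

end UpperMain

end HamProof


theorem stmt10 (L n t : ℕ) (hL : 2 ≤ L) (hn : 1 ≤ n) (ht : t ≤ n - 1) :
    embEC L n t = (L - 1) * (n - t) * L ^ t := by
  classical
  obtain ⟨F0, h1, h2, h3, h4⟩ := HamProof.upper_bound (L := L) (n := n) (t := t) hL hn ht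
  rw [embEC]
  apply le_antisymm
  · exact Nat.sInf_le ⟨F0, h1, h2, h3, h4⟩
  · refine le_csInf ⟨(L - 1) * (n - t) * L ^ t, ?_⟩ ?_
    · exact ⟨F0, h1, h2, h3, h4⟩
    · rintro k ⟨F, hFE, hdis, hcomp, rfl⟩
      exact HamProof.lower_bound hL (by omega) F hdis hcomp
end

section
/- Let L ≥ 2, n ≥ 2, 0 ≤ t ≤ n−1 and 1 ≤ g ≤ L−1. In the Hamming graph K_L^n, let X be the union of the g sub-layers 0...0f X_t...X_1 for f = 0,...,g−1 (all strings whose coordinates above position t+1 are 0 and whose (t+1)-th coordinate is at most g−1). Then |X| = gL^t, both K_L^n[X] and K_L^n[complement of X] are connected, and the edge boundary satisfies |[X, X̄]| = g[(L−1)(n−t) − (g−1)]L^t. -/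
/-- The edge boundary `[X, X̄]` of a vertex set `X` in `G`: edges with one end in `X`
and the other end outside `X`. -/
def edgeBoundary {V : Type*} (G : SimpleGraph V) (X : Set V) : Set (Sym2 V) :=
  {e | e ∈ G.edgeSet ∧ ∃ u v, e = s(u, v) ∧ u ∈ X ∧ v ∉ X}

lemma hamming_adj_update {L n : ℕ} (u : Fin n → Fin L) (i : Fin n) (c : Fin L)
    (h : c ≠ u i) : (hammingGraph L n).Adj u (Function.update u i c) := by
  constructor
  · intro he
    have := congrFun he i
    simp [Function.update_self] at this
    exact h this.symm
  · intro j k hj hk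
    by_cases hji : j = i
    · by_cases hki : k = i
      · rw [hji, hki]
      · exact absurd (Function.update_of_ne hki c u).symm hk
    · exact absurd (Function.update_of_ne hji c u).symm hj

lemma eq_update_of_adj {L n : ℕ} {u v : Fin n → Fin L}
    (h : (hammingGraph L n).Adj u v) :
    ∃ i, v = Function.update u i (v i) ∧ v i ≠ u i := by
  obtain ⟨hne, huniq⟩ := h
  obtain ⟨i, hi⟩ := Function.ne_iff.mp hne
  refine ⟨i, ?_, hi.symm⟩
  funext j
  by_cases hji : j = i
  · subst hji; simp
  · rw [Function.update_of_ne hji]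
    by_contra hvj
    exact hji (huniq j i (fun a => hvj a.symm) hi)

lemma update_inj {L n : ℕ} {u : Fin n → Fin L} {i i' : Fin n} {c c' : Fin L}
    (h : Function.update u i c = Function.update u i' c')
    (hc : c ≠ u i) (hc' : c' ≠ u i') : i = i' ∧ c = c' := by
  have hii : i = i' := by
    by_contra hne
    have := congrFun h i
    rw [Function.update_self, Function.update_of_ne hne] at this
    exact hc this
  subst hii
  have := congrFun h i
  simp at this
  exact ⟨rfl, this⟩

lemma reach_aux {V : Type*} (G : SimpleGraph V) (T S : Set V) (hST : S ⊆ T) (u0 : V)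
    (h0 : u0 ∈ S) (μ : V → ℕ)
    (step : ∀ v ∈ S, v ≠ u0 → ∃ w ∈ S, G.Adj v w ∧ μ w < μ v) :
    ∀ v, (hv : v ∈ S) → (G.induce T).Reachable ⟨v, hST hv⟩ ⟨u0, hST h0⟩ := by
  have key : ∀ m, ∀ v, μ v ≤ m → (hv : v ∈ S) →
      (G.induce T).Reachable ⟨v, hST hv⟩ ⟨u0, hST h0⟩ := by
    intro m
    induction m with
    | zero =>
      intro v hm hv
      by_cases h : v = u0
      · subst h; rfl
      · obtain ⟨w, hw, hadj, hlt⟩ := step v hv h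
        omega
    | succ m ih =>
      intro v hm hv
      by_cases h : v = u0
      · subst h; rfl
      · obtain ⟨w, hw, hadj, hlt⟩ := step v hv h
        have hadj' : (G.induce T).Adj ⟨v, hST hv⟩ ⟨w, hST hw⟩ := hadj
        exact hadj'.reachable.trans (ih w (by omega) hw)
  intro v hv
  exact key (μ v) v le_rfl hv

lemma reach_to {L n : ℕ} (T S : Set (Fin n → Fin L)) (hST : S ⊆ T)
    (u0 : Fin n → Fin L) (h0 : u0 ∈ S)
    (hclose : ∀ v ∈ S, ∀ i, Function.update v i (u0 i) ∈ S) :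
    ∀ v, (hv : v ∈ S) →
      ((hammingGraph L n).induce T).Reachable ⟨v, hST hv⟩ ⟨u0, hST h0⟩ := by
  apply reach_aux (hammingGraph L n) T S hST u0 h0
    (fun v => (Finset.univ.filter fun i => v i ≠ u0 i).card)
  intro v hv hne
  obtain ⟨i, hi⟩ := Function.ne_iff.mp hne
  refine ⟨Function.update v i (u0 i), hclose v hv i,
    hamming_adj_update v i (u0 i) (Ne.symm hi), ?_⟩
  apply Finset.card_lt_card
  constructor
  · intro j hj
    simp only [Finset.mem_filter, Finset.mem_univ, true_and] at hj ⊢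
    by_cases hji : j = i
    · subst hji; simp at hj
    · rwa [Function.update_of_ne hji] at hj
  · intro hsub
    have := hsub (by simp [hi] : i ∈ Finset.univ.filter fun j => v j ≠ u0 j)
    simp at this

lemma card_fin_ge (n a : ℕ) : Nat.card {i : Fin n // a ≤ (i : ℕ)} = n - a := by
  rcases le_or_gt a n with h | h
  · have e : {i : Fin n // a ≤ (i : ℕ)} ≃ Fin (n - a) :=
      { toFun := fun i => ⟨(i : Fin n) - a, by omega⟩
        invFun := fun j => ⟨⟨a + j, by omega⟩, by simp⟩
        left_inv := fun i => by
          apply Subtype.ext; apply Fin.ext; simp; omega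
        right_inv := fun j => by apply Fin.ext; simp }
    rw [Nat.card_congr e, Nat.card_eq_fintype_card, Fintype.card_fin]
  · haveI : IsEmpty {i : Fin n // a ≤ (i : ℕ)} := ⟨fun i => by omega⟩
    rw [Nat.card_of_isEmpty]; omega

lemma arith (L n t g : ℕ) (hL : 2 ≤ L) (hn : 2 ≤ n) (ht : t ≤ n - 1)
    (hg1 : 1 ≤ g) (hg2 : g ≤ L - 1) :
    g * L ^ t * ((L - g) + (n - 1 - t) * (L - 1))
      = g * ((L - 1) * (n - t) - (g - 1)) * L ^ t := by
  obtain ⟨m, rfl⟩ : ∃ m, n = t + m + 1 := ⟨n - t - 1, by omega⟩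
  obtain ⟨s, rfl⟩ : ∃ s, L = g + s + 1 := ⟨L - g - 1, by omega⟩
  obtain ⟨g', rfl⟩ : ∃ g', g = g' + 1 := ⟨g - 1, by omega⟩
  have e1 : g' + 1 + s + 1 - (g' + 1) = s + 1 := by omega
  have e2 : t + m + 1 - 1 - t = m := by omega
  have e3 : g' + 1 + s + 1 - 1 = g' + s + 1 := by omega
  have e4 : t + m + 1 - t = m + 1 := by omega
  have e5 : g' + 1 - 1 = g' := by omega
  rw [e1, e2, e3, e4, e5]
  have key : (g' + s + 1) * (m + 1) - g' = (s + 1) + m * (g' + s + 1) := by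
    have : (g' + s + 1) * (m + 1) = g' + ((s + 1) + m * (g' + s + 1)) := by ring
    rw [this, Nat.add_sub_cancel_left]
  rw [key]; ring

lemma card_X (L n t g : ℕ) (hL : 2 ≤ L) (htn : t < n) (hg1 : 1 ≤ g) (hgL : g ≤ L) :
    Nat.card {v : Fin n → Fin L //
      (∀ i : Fin n, t < (i : ℕ) → (v i : ℕ) = 0) ∧
      (∀ i : Fin n, (i : ℕ) = t → (v i : ℕ) < g)} = g * L ^ t := by
  haveI : NeZero L := ⟨by omega⟩
  set t' : Fin n := ⟨t, htn⟩ with ht'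
  have e : {v : Fin n → Fin L //
      (∀ i : Fin n, t < (i : ℕ) → (v i : ℕ) = 0) ∧
      (∀ i : Fin n, (i : ℕ) = t → (v i : ℕ) < g)} ≃ (Fin t → Fin L) × Fin g :=
    { toFun := fun v => ⟨fun j => v.1 ⟨j, by omega⟩, ⟨(v.1 t' : ℕ), v.2.2 t' rfl⟩⟩
      invFun := fun p => ⟨fun i =>
          if h : (i : ℕ) < t then p.1 ⟨i, h⟩
          else if h2 : (i : ℕ) = t then ⟨p.2, by omega⟩ else 0,
        by
          constructor
          · intro i hi
            have h1 : ¬ (i : ℕ) < t := by omega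
            have h2 : ¬ (i : ℕ) = t := by omega
            simp [h1, h2]
          · intro i hi
            have h1 : ¬ (i : ℕ) < t := by omega
            simp [h1, hi]⟩
      left_inv := fun v => by
        apply Subtype.ext
        funext i
        by_cases h1 : (i : ℕ) < t
        · simp [h1]
        · by_cases h2 : (i : ℕ) = t
          · have : i = t' := Fin.ext h2
            subst this
            simp [h1, h2]
          · have h3 : t < (i : ℕ) := by omega
            apply Fin.ext
            simp [h1, h2, v.2.1 i h3]
      right_inv := fun p => by
        refine Prod.ext ?_ ?_
        · funext j
          have hj : ((⟨(j : ℕ), by omega⟩ : Fin n) : ℕ) < t := j.2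
          simp [hj]
        · apply Fin.ext
          have h1 : ¬ (t' : ℕ) < t := by simp [ht']
          have h2 : (t' : ℕ) = t := rfl
          simp [h1, h2] }
  rw [Nat.card_congr e, Nat.card_prod, Nat.card_eq_fintype_card, Nat.card_eq_fintype_card]
  simp [mul_comm]

lemma nbhd_equiv (L n t g : ℕ) (htn : t < n) (u : Fin n → Fin L)
    (hu1 : ∀ i : Fin n, t < (i : ℕ) → (u i : ℕ) = 0)
    (hu2 : ∀ i : Fin n, (i : ℕ) = t → (u i : ℕ) < g) :
    Nonempty (({c : Fin L // g ≤ (c : ℕ)} ⊕ {i : Fin n // t < (i : ℕ)} × {c : Fin L // 1 ≤ (c : ℕ)})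
      ≃ {v : Fin n → Fin L //
        ¬((∀ i : Fin n, t < (i : ℕ) → (v i : ℕ) = 0) ∧
          (∀ i : Fin n, (i : ℕ) = t → (v i : ℕ) < g)) ∧
        (hammingGraph L n).Adj u v}) := by
  set t' : Fin n := ⟨t, htn⟩ with ht'
  have hut : (u t' : ℕ) < g := hu2 t' rfl
  set f : ({c : Fin L // g ≤ (c : ℕ)} ⊕ {i : Fin n // t < (i : ℕ)} × {c : Fin L // 1 ≤ (c : ℕ)}) →
      {v : Fin n → Fin L //
        ¬((∀ i : Fin n, t < (i : ℕ) → (v i : ℕ) = 0) ∧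
          (∀ i : Fin n, (i : ℕ) = t → (v i : ℕ) < g)) ∧
        (hammingGraph L n).Adj u v} := fun d =>
    match d with
    | Sum.inl c => ⟨Function.update u t' c.1,
        ⟨fun ⟨_, hB⟩ => by
            have := hB t' rfl
            rw [Function.update_self] at this
            have := c.2
            omega,
          hamming_adj_update u t' c.1 (by
            intro h
            have h2 := c.2
            have h3 : (c.1 : ℕ) = (u t' : ℕ) := congrArg Fin.val h
            omega)⟩⟩
    | Sum.inr p => ⟨Function.update u p.1.1 p.2.1,
        ⟨fun ⟨hA, _⟩ => by
            have := hA p.1.1 p.1.2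
            rw [Function.update_self] at this
            have := p.2.2
            omega,
          hamming_adj_update u p.1.1 p.2.1 (by
            intro h
            have h0 : (u p.1.1 : ℕ) = 0 := hu1 p.1.1 p.1.2
            have := p.2.2
            rw [h] at this
            omega)⟩⟩
    with hf
  have hbij : Function.Bijective f := by
    constructor
    · rintro (c | p) (c' | p') h
      · have h2 := congrArg Subtype.val h
        simp only [hf] at h2
        have := congrFun h2 t'
        rw [Function.update_self, Function.update_self] at this
        simp [Subtype.ext this]
      · exfalso
        have h2 := congrArg Subtype.val h
        simp only [hf] at h2
        have hne : p'.1.1 ≠ t' := by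
          intro hh
          have := p'.1.2
          rw [hh] at this
          simp [ht'] at this
        have := congrFun h2 p'.1.1
        rw [Function.update_of_ne hne, Function.update_self] at this
        have h0 : (u p'.1.1 : ℕ) = 0 := hu1 p'.1.1 p'.1.2
        have := p'.2.2
        omega
      · exfalso
        have h2 := congrArg Subtype.val h
        simp only [hf] at h2
        have hne : p.1.1 ≠ t' := by
          intro hh
          have := p.1.2
          rw [hh] at this
          simp [ht'] at this
        have := congrFun h2 p.1.1
        rw [Function.update_of_ne hne, Function.update_self] at this
        have h0 : (u p.1.1 : ℕ) = 0 := hu1 p.1.1 p.1.2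
        have := p.2.2
        omega
      · have h2 := congrArg Subtype.val h
        simp only [hf] at h2
        have hc : p.2.1 ≠ u p.1.1 := by
          intro hh
          have h0 : (u p.1.1 : ℕ) = 0 := hu1 p.1.1 p.1.2
          have := p.2.2
          rw [hh] at this
          omega
        have hc' : p'.2.1 ≠ u p'.1.1 := by
          intro hh
          have h0 : (u p'.1.1 : ℕ) = 0 := hu1 p'.1.1 p'.1.2
          have := p'.2.2
          rw [hh] at this
          omega
        obtain ⟨hi, hcc⟩ := update_inj h2 hc hc'
        congr 1
        exact Prod.ext (Subtype.ext hi) (Subtype.ext hcc)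
    · rintro ⟨v, hnX, hadj⟩
      obtain ⟨i, hvu, hvi⟩ := eq_update_of_adj hadj
      have hoff : ∀ j, j ≠ i → v j = u j := by
        intro j hj
        rw [hvu, Function.update_of_ne hj]
      rcases lt_trichotomy (i : ℕ) t with hit | hit | hit
      · exfalso
        apply hnX
        constructor
        · intro j hj
          rw [hoff j (by intro hh; rw [hh] at hj; omega)]
          exact hu1 j hj
        · intro j hj
          rw [hoff j (by intro hh; rw [hh] at hj; omega)]
          exact hu2 j hj
      · have hit' : i = t' := Fin.ext hit
        have hA : ∀ j : Fin n, t < (j : ℕ) → (v j : ℕ) = 0 := by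
          intro j hj
          rw [hoff j (by intro hh; rw [hh, hit'] at hj; simp [ht'] at hj)]
          exact hu1 j hj
        have hgB : g ≤ (v i : ℕ) := by
          by_contra hcon
          apply hnX
          refine ⟨hA, ?_⟩
          intro j hj
          by_cases hji : j = i
          · subst hji; omega
          · rw [hoff j hji]; exact hu2 j hj
        refine ⟨Sum.inl ⟨v i, hgB⟩, ?_⟩
        apply Subtype.ext
        simp only [hf]
        rw [← hit', ← hvu]
      · have hvne : 1 ≤ (v i : ℕ) := by
          have h0 : (u i : ℕ) = 0 := hu1 i hit
          by_contra hcon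
          apply hvi
          apply Fin.ext
          omega
        refine ⟨Sum.inr ⟨⟨i, hit⟩, ⟨v i, hvne⟩⟩, ?_⟩
        apply Subtype.ext
        simp only [hf]
        rw [← hvu]
  exact ⟨Equiv.ofBijective f hbij⟩

lemma card_D (L n t g : ℕ) :
    Nat.card ({c : Fin L // g ≤ (c : ℕ)} ⊕ {i : Fin n // t < (i : ℕ)} × {c : Fin L // 1 ≤ (c : ℕ)})
      = (L - g) + (n - 1 - t) * (L - 1) := by
  rw [Nat.card_sum, Nat.card_prod]
  have e1 : Nat.card {c : Fin L // g ≤ (c : ℕ)} = L - g := card_fin_ge L g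
  have e2 : Nat.card {i : Fin n // t < (i : ℕ)} = n - (t + 1) := by
    rw [← card_fin_ge n (t + 1)]
    exact Nat.card_congr (Equiv.subtypeEquivRight (fun i => by omega))
  have e3 : Nat.card {c : Fin L // 1 ≤ (c : ℕ)} = L - 1 := card_fin_ge L 1
  rw [e1, e2, e3]
  have : n - (t + 1) = n - 1 - t := by omega
  rw [this]
theorem stmt17 (L n t g : ℕ) (hL : 2 ≤ L) (hn : 2 ≤ n) (ht : t ≤ n - 1)
    (hg1 : 1 ≤ g) (hg2 : g ≤ L - 1)
    (X : Set (Fin n → Fin L))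
    (hX : X = {v | (∀ i : Fin n, t < (i : ℕ) → (v i : ℕ) = 0) ∧
                   (∀ i : Fin n, (i : ℕ) = t → (v i : ℕ) < g)}) :
    X.ncard = g * L ^ t ∧
      ((hammingGraph L n).induce X).Connected ∧
      ((hammingGraph L n).induce Xᶜ).Connected ∧
      (edgeBoundary (hammingGraph L n) X).ncard
        = g * ((L - 1) * (n - t) - (g - 1)) * L ^ t := by
  subst hX
  haveI : NeZero L := ⟨by omega⟩
  have htn : t < n := by omega
  set t' : Fin n := ⟨t, htn⟩ with ht'
  set X : Set (Fin n → Fin L) := {v | (∀ i : Fin n, t < (i : ℕ) → (v i : ℕ) = 0) ∧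
                   (∀ i : Fin n, (i : ℕ) = t → (v i : ℕ) < g)} with hXdef
  have hcard : X.ncard = g * L ^ t := by
    rw [← Nat.card_coe_set_eq]
    exact card_X L n t g hL htn hg1 (by omega)
  refine ⟨hcard, ?_, ?_, ?_⟩
  · -- X connected
    have hz0 : (fun _ => (0 : Fin L)) ∈ X := by
      constructor
      · intro i _; simp
      · intro i _; simp; omega
    have hclose : ∀ v ∈ X, ∀ i, Function.update v i ((fun _ => (0 : Fin L)) i) ∈ X := by
      intro v hv i
      constructor
      · intro j hj
        by_cases hji : j = i
        · subst hji; simp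
        · rw [Function.update_of_ne hji]; exact hv.1 j hj
      · intro j hj
        by_cases hji : j = i
        · subst hji; simp; omega
        · rw [Function.update_of_ne hji]; exact hv.2 j hj
    have r := reach_to X X subset_rfl (fun _ => (0 : Fin L)) hz0 hclose
    rw [SimpleGraph.connected_iff]
    refine ⟨?_, ⟨⟨_, hz0⟩⟩⟩
    rintro ⟨va, hva⟩ ⟨vb, hvb⟩
    exact (r va hva).trans (r vb hvb).symm
  · -- Xᶜ connected
    set gL : Fin L := ⟨g, by omega⟩ with hgL
    set w0 : Fin n → Fin L := Function.update (fun _ => (0 : Fin L)) t' gL with hw0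
    set S' : Set (Fin n → Fin L) := {v | g ≤ (v t' : ℕ)} with hS'def
    have hS' : S' ⊆ Xᶜ := by
      intro v hv hvX
      have := hvX.2 t' rfl
      have : g ≤ (v t' : ℕ) := hv
      omega
    have h0 : w0 ∈ S' := by
      show g ≤ (w0 t' : ℕ)
      rw [hw0, Function.update_self]
    have hclose : ∀ v ∈ S', ∀ i, Function.update v i (w0 i) ∈ S' := by
      intro v hv i
      show g ≤ ((Function.update v i (w0 i)) t' : ℕ)
      by_cases hit : t' = i
      · subst hit
        rw [Function.update_self, hw0, Function.update_self]
      · rw [Function.update_of_ne hit]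
        exact hv
    have r := reach_to Xᶜ S' hS' w0 h0 hclose
    have key : ∀ v, (hv : v ∈ Xᶜ) →
        ((hammingGraph L n).induce Xᶜ).Reachable ⟨v, hv⟩ ⟨w0, hS' h0⟩ := by
      intro v hv
      by_cases hc : g ≤ (v t' : ℕ)
      · exact r v hc
      · have hB : ∀ i : Fin n, (i : ℕ) = t → (v i : ℕ) < g := by
          intro i hi
          have : i = t' := Fin.ext hi
          subst this
          omega
        have hnA : ¬ (∀ i : Fin n, t < (i : ℕ) → (v i : ℕ) = 0) := by
          intro hA
          exact hv ⟨hA, hB⟩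
        have hv1S : Function.update v t' gL ∈ S' := by
          show g ≤ ((Function.update v t' gL) t' : ℕ)
          rw [Function.update_self]
        have adj : (hammingGraph L n).Adj v (Function.update v t' gL) := by
          apply hamming_adj_update
          intro h
          have : (gL : ℕ) = (v t' : ℕ) := congrArg Fin.val h
          rw [hgL] at this
          simp at this
          omega
        have hadj' : ((hammingGraph L n).induce Xᶜ).Adj ⟨v, hv⟩
            ⟨Function.update v t' gL, hS' hv1S⟩ := adj
        exact hadj'.reachable.trans (r _ hv1S)
    rw [SimpleGraph.connected_iff]
    refine ⟨?_, ⟨⟨w0, hS' h0⟩⟩⟩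
    rintro ⟨va, hva⟩ ⟨vb, hvb⟩
    exact (key va hva).trans (key vb hvb).symm
  · -- edge boundary count
    set G := hammingGraph L n with hG
    set P : Set ((Fin n → Fin L) × (Fin n → Fin L)) :=
      {p | p.1 ∈ X ∧ p.2 ∉ X ∧ G.Adj p.1 p.2} with hP
    let f1 : ↥P → ↥(edgeBoundary G X) := fun p =>
      ⟨s(p.1.1, p.1.2), G.mem_edgeSet.mpr p.2.2.2, p.1.1, p.1.2, rfl, p.2.1, p.2.2.1⟩
    have hbij1 : Function.Bijective f1 := by
      constructor
      · rintro ⟨⟨u, v⟩, hu, hv, hadj⟩ ⟨⟨u', v'⟩, hu', hv', hadj'⟩ h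
        have h2 : s(u, v) = s(u', v') := congrArg Subtype.val h
        rw [Sym2.eq_iff] at h2
        rcases h2 with ⟨rfl, rfl⟩ | ⟨rfl, rfl⟩
        · rfl
        · exact absurd hu hv'
      · rintro ⟨e, he, u, v, rfl, hu, hv⟩
        exact ⟨⟨(u, v), hu, hv, G.mem_edgeSet.mp he⟩, rfl⟩
    have e2 : ↥P ≃ Σ u : ↥X, {v : Fin n → Fin L // v ∉ X ∧ G.Adj u.1 v} :=
      { toFun := fun p => ⟨⟨p.1.1, p.2.1⟩, ⟨p.1.2, p.2.2.1, p.2.2.2⟩⟩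
        invFun := fun q => ⟨(q.1.1, q.2.1), q.1.2, q.2.2.1, q.2.2.2⟩
        left_inv := fun p => rfl
        right_inv := fun q => rfl }
    have e3 : ∀ u : ↥X,
        {v : Fin n → Fin L // v ∉ X ∧ G.Adj u.1 v} ≃
        ({c : Fin L // g ≤ (c : ℕ)} ⊕ {i : Fin n // t < (i : ℕ)} × {c : Fin L // 1 ≤ (c : ℕ)}) :=
      fun u => (Classical.choice (nbhd_equiv L n t g htn u.1 u.2.1 u.2.2)).symm
    have e : ↥(edgeBoundary G X) ≃
        ↥X × ({c : Fin L // g ≤ (c : ℕ)} ⊕ {i : Fin n // t < (i : ℕ)} × {c : Fin L // 1 ≤ (c : ℕ)}) :=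
      (Equiv.ofBijective f1 hbij1).symm.trans
        (e2.trans ((Equiv.sigmaCongrRight e3).trans (Equiv.sigmaEquivProd _ _)))
    rw [← Nat.card_coe_set_eq, Nat.card_congr e, Nat.card_prod, card_D,
      Nat.card_coe_set_eq, hcard]
    exact arith L n t g hL hn ht hg1 hg2
end

section
/- Let L be odd, L ≥ 3, n ≥ 2, and 0 ≤ j ≤ n−2. Then ξ_{Σ_{i=0}^{j+1} ⌊L/2⌋ L^{n−1−i}}(K_L^n) − ξ_{Σ_{i=0}^{j} ⌊L/2⌋ L^{n−1−i}}(K_L^n) = ξ_{⌊L/2⌋ L^{n−2−j}}(K_L^{n−1−j}) ≥ 0, where ξ_m(K_L^N) = (L−1)Nm − ex_m(K_L^N) with ex_m given by the standard base-L formula. -/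
/-- The base-`L` digit of `m` at position `j`, as an integer. -/
def dig (L m j : ℕ) : ℤ := ((Nat.digits L m).getD j 0 : ℤ)

/-- `ex_m(K_L^n)`: twice the maximum number of edges of an induced subgraph on `m`
vertices of the Hamming graph `K_L^n`, given by the explicit base-`L` formula
(it does not depend on `n`). -/
def exm (L m : ℕ) : ℤ :=
  (∑ j ∈ Finset.range (Nat.digits L m).length,
    (((L : ℤ) - 1) * dig L m j * j * (L : ℤ) ^ j + (dig L m j - 1) * dig L m j * (L : ℤ) ^ j))
  + 2 * ∑ j ∈ Finset.range (Nat.digits L m).length, ∑ j' ∈ Finset.range j,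
      dig L m j * dig L m j' * (L : ℤ) ^ j'

/-- `ξ_m(K_L^n) = (L-1) n m - ex_m(K_L^n)`. -/
def xi (L n m : ℕ) : ℤ := ((L : ℤ) - 1) * n * m - exm L m

namespace Stmt19

lemma getD_replicate {α : Type*} (a d : α) {p j : ℕ} (h : j < p) :
    (List.replicate p a).getD j d = a := by
  rw [List.getD_eq_getElem?_getD, List.getElem?_replicate, if_pos h]; rfl

lemma ofDigits_replicate_zero (b p : ℕ) : Nat.ofDigits b (List.replicate p 0) = 0 := by
  induction p with
  | zero => simp [Nat.ofDigits]
  | succ p ih => simp [List.replicate_succ, Nat.ofDigits, ih]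

lemma ofDigits_replicate (b c k : ℕ) :
    Nat.ofDigits b (List.replicate k c) = c * ∑ i ∈ Finset.range k, b ^ i := by
  induction k with
  | zero => simp [Nat.ofDigits]
  | succ k ih =>
    simp only [List.replicate_succ, Nat.ofDigits_cons, ih, Finset.sum_range_succ',
      pow_zero, mul_one, mul_add, Finset.mul_sum]
    rw [add_comm]
    congr 1
    exact Finset.sum_congr rfl fun x _ => by ring

lemma ofDigits_rep (L c p k : ℕ) :
    Nat.ofDigits L (List.replicate p 0 ++ List.replicate k c)
      = c * ∑ i ∈ Finset.Ico p (p + k), L ^ i := by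
  rw [Nat.ofDigits_append, ofDigits_replicate_zero, ofDigits_replicate,
    Finset.sum_Ico_eq_sum_range]
  simp only [List.length_replicate, Nat.add_sub_cancel_left, Finset.mul_sum, pow_add]
  rw [zero_add]
  exact Finset.sum_congr rfl fun x _ => by ring

lemma digits_rep (L c p k : ℕ) (hL : 2 ≤ L) (hc : 0 < c) (hcL : c < L) (hk : 0 < k) :
    Nat.digits L (c * ∑ i ∈ Finset.Ico p (p + k), L ^ i)
      = List.replicate p 0 ++ List.replicate k c := by
  rw [← ofDigits_rep]
  apply Nat.digits_ofDigits _ hL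
  · intro d hd
    rcases List.mem_append.1 hd with h | h <;>
      · have := List.eq_of_mem_replicate h; omega
  · intro h
    rw [List.getLast_append]
    have hne : (List.replicate k c).isEmpty = false := by
      simp [List.isEmpty_iff, List.replicate_eq_nil_iff]; omega
    rw [dif_neg (by simp [hne])]
    have : ∀ h2, (List.replicate k c).getLast h2 = c := by
      intro h2
      have := List.getLast_mem h2
      exact List.eq_of_mem_replicate this
    rw [this]; omega


lemma dig_rep (L c p k : ℕ) (hL : 2 ≤ L) (hc : 0 < c) (hcL : c < L) (hk : 0 < k) (j : ℕ) :
    dig L (c * ∑ i ∈ Finset.Ico p (p + k), L ^ i) j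
      = if p ≤ j ∧ j < p + k then (c : ℤ) else 0 := by
  unfold dig
  rw [digits_rep L c p k hL hc hcL hk]
  by_cases h1 : j < p
  · rw [List.getD_append _ _ _ _ (by simpa using h1), getD_replicate _ _ h1,
      if_neg (by omega)]
    rfl
  · rw [List.getD_append_right _ _ _ _ (by simpa using not_lt.mp h1)]
    simp only [List.length_replicate]
    by_cases h2 : j < p + k
    · rw [getD_replicate _ _ (by omega), if_pos ⟨by omega, h2⟩]
    · rw [List.getD_eq_default _ _ (by simp; omega), if_neg (by omega)]
      rfl

lemma len_rep (L c p k : ℕ) (hL : 2 ≤ L) (hc : 0 < c) (hcL : c < L) (hk : 0 < k) :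
    (Nat.digits L (c * ∑ i ∈ Finset.Ico p (p + k), L ^ i)).length = p + k := by
  rw [digits_rep L c p k hL hc hcL hk]; simp

lemma exm_rep (L c p k : ℕ) (hL : 2 ≤ L) (hc : 0 < c) (hcL : c < L) (hk : 0 < k) :
    exm L (c * ∑ i ∈ Finset.Ico p (p + k), L ^ i)
      = (∑ j ∈ Finset.Ico p (p + k),
          (((L:ℤ)-1) * c * j * (L:ℤ)^j + ((c:ℤ)-1) * c * (L:ℤ)^j))
        + 2 * ∑ j ∈ Finset.Ico p (p + k), ∑ j' ∈ Finset.Ico p j,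
            (c:ℤ) * c * (L:ℤ)^j' := by
  have hd := dig_rep L c p k hL hc hcL hk
  have key : ∀ (F : ℕ → ℤ), (∀ j < p, F j = 0) →
      ∑ j ∈ Finset.range (p + k), F j = ∑ j ∈ Finset.Ico p (p + k), F j := by
    intro F hF
    rw [Finset.range_eq_Ico,
      ← Finset.sum_Ico_consecutive F (Nat.zero_le p) (Nat.le_add_right p k),
      Finset.sum_eq_zero, zero_add]
    intro j hj
    exact hF j (Finset.mem_Ico.1 hj).2
  unfold exm
  rw [len_rep L c p k hL hc hcL hk]
  congr 1
  · rw [key _ (fun j hj => by rw [hd j, if_neg (by omega)]; ring)]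
    refine Finset.sum_congr rfl fun x hx => ?_
    have hx' := Finset.mem_Ico.1 hx
    rw [hd x, if_pos (by omega)]
  · congr 1
    rw [key _ (fun j hj => by
      rw [Finset.sum_eq_zero]
      intro j' _
      rw [hd j, if_neg (by omega)]; ring)]
    refine Finset.sum_congr rfl fun x hx => ?_
    have hx' := Finset.mem_Ico.1 hx
    rw [Finset.range_eq_Ico,
      ← Finset.sum_Ico_consecutive _ (Nat.zero_le p) hx'.1,
      Finset.sum_eq_zero (fun j' hj' => by
        rw [hd j', if_neg (by have := (Finset.mem_Ico.1 hj').2; omega)]; ring),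
      zero_add]
    refine Finset.sum_congr rfl fun y hy => ?_
    have hy' := Finset.mem_Ico.1 hy
    rw [hd x, if_pos (by omega), hd y, if_pos (by omega)]


lemma sum_rev (L c n k : ℕ) (hk : k ≤ n) :
    ∑ i ∈ Finset.range k, c * L ^ (n - 1 - i)
      = c * ∑ i ∈ Finset.Ico (n - k) n, L ^ i := by
  rw [Finset.mul_sum, Finset.sum_Ico_eq_sum_range]
  have hnk : n - (n - k) = k := by omega
  rw [hnk]
  refine Eq.trans (Finset.sum_congr rfl fun i hi => ?_)
    (Finset.sum_range_reflect (fun i => c * L ^ (n - k + i)) k)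
  have hi' := Finset.mem_range.1 hi
  show c * L ^ (n - 1 - i) = c * L ^ (n - k + (k - 1 - i))
  congr 2
  omega

lemma xi_single (L c q : ℕ) (hL2 : (L:ℤ) = 2*c+1) (hc : 0 < c) (hcL : c < L) :
    xi L (q+1) (c * L ^ q) = ((c:ℤ)+1) * c * (L:ℤ)^q := by
  have h : c * (L:ℕ) ^ q = c * ∑ i ∈ Finset.Ico q (q + 1), L ^ i := by
    simp
  rw [h]
  unfold xi
  rw [exm_rep L c q 1 (by omega) hc hcL one_pos]
  rw [Finset.Ico_add_one_right_eq_Icc, Finset.Icc_self]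
  simp only [Finset.sum_singleton, Finset.Ico_self, Finset.sum_empty, mul_zero, add_zero]
  push_cast
  rw [hL2]
  ring

end Stmt19

open Stmt19 in
theorem stmt19 (L n j : ℕ) (hodd : Odd L) (hL : 3 ≤ L) (hn : 2 ≤ n) (hj : j ≤ n - 2) :
    xi L n (∑ i ∈ Finset.range (j + 2), (L / 2) * L ^ (n - 1 - i))
        - xi L n (∑ i ∈ Finset.range (j + 1), (L / 2) * L ^ (n - 1 - i))
      = xi L (n - 1 - j) ((L / 2) * L ^ (n - 2 - j)) ∧
    0 ≤ xi L (n - 1 - j) ((L / 2) * L ^ (n - 2 - j)) := by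
  obtain ⟨c, hc⟩ := hodd
  set q := n - 2 - j with hq
  set k := j + 1 with hk
  have hcpos : 0 < c := by omega
  have hcL : c < L := by omega
  have hdiv : L / 2 = c := by omega
  have hn1 : n - 1 - j = q + 1 := by omega
  have hn2 : n = q + 1 + k := by omega
  have hLZ : (L:ℤ) = 2*c+1 := by exact_mod_cast hc
  rw [hdiv, hn1]
  have hm1 : ∑ i ∈ Finset.range (j + 1), c * L ^ (n - 1 - i)
      = c * ∑ i ∈ Finset.Ico (q+1) (q+1+k), L ^ i := by
    rw [sum_rev L c n k (by omega), show n - k = q + 1 from by omega, hn2]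
  have hm2 : ∑ i ∈ Finset.range (j + 2), c * L ^ (n - 1 - i)
      = c * ∑ i ∈ Finset.Ico q (q+1+k), L ^ i := by
    rw [sum_rev L c n (k+1) (by omega), show n - (k+1) = q from by omega, hn2]
  rw [hm1, hm2]
  constructor
  · rw [xi_single L c q hLZ hcpos hcL]
    unfold xi
    have hE2 : exm L (c * ∑ i ∈ Finset.Ico q (q+1+k), L ^ i)
        = (∑ j ∈ Finset.Ico q (q+1+k),
            (((L:ℤ)-1) * c * j * (L:ℤ)^j + ((c:ℤ)-1) * c * (L:ℤ)^j))
          + 2 * ∑ j ∈ Finset.Ico q (q+1+k), ∑ j' ∈ Finset.Ico q j,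
              (c:ℤ) * c * (L:ℤ)^j' := by
      have h := exm_rep L c q (k+1) (by omega) hcpos hcL (by omega)
      rwa [show q + (k+1) = q+1+k from by omega] at h
    rw [hE2, exm_rep L c (q+1) k (by omega) hcpos hcL (by omega)]
    have hqlt : q < q + 1 + k := by omega
    -- m2 = c*L^q + m1
    have hmm : (c:ℤ) * ∑ i ∈ Finset.Ico q (q+1+k), (L:ℤ) ^ i
        = (c:ℤ) * (L:ℤ)^q + c * ∑ i ∈ Finset.Ico (q+1) (q+1+k), (L:ℤ) ^ i := by
      rw [Finset.sum_eq_sum_Ico_succ_bot hqlt]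
      ring
    -- A2 = A_q + A1
    rw [Finset.sum_eq_sum_Ico_succ_bot hqlt
      (fun j => (((L:ℤ)-1) * c * j * (L:ℤ)^j + ((c:ℤ)-1) * c * (L:ℤ)^j))]
    -- B2
    have hB : ∑ j' ∈ Finset.Ico q (q+1+k), ∑ j'' ∈ Finset.Ico q j', (c:ℤ) * c * (L:ℤ)^j''
        = k * ((c:ℤ) * c * (L:ℤ)^q)
          + ∑ j' ∈ Finset.Ico (q+1) (q+1+k), ∑ j'' ∈ Finset.Ico (q+1) j', (c:ℤ) * c * (L:ℤ)^j'' := by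
      rw [Finset.sum_eq_sum_Ico_succ_bot hqlt, Finset.Ico_self, Finset.sum_empty, zero_add]
      rw [show (∑ j' ∈ Finset.Ico (q+1) (q+1+k), ∑ j'' ∈ Finset.Ico q j', (c:ℤ) * c * (L:ℤ)^j'')
          = ∑ j' ∈ Finset.Ico (q+1) (q+1+k),
              ((c:ℤ) * c * (L:ℤ)^q + ∑ j'' ∈ Finset.Ico (q+1) j', (c:ℤ) * c * (L:ℤ)^j'') from
        Finset.sum_congr rfl fun x hx => by
          have hx' := Finset.mem_Ico.1 hx
          rw [Finset.sum_eq_sum_Ico_succ_bot (by omega)]]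
      rw [Finset.sum_add_distrib, Finset.sum_const, Nat.card_Ico,
        show q + 1 + k - (q+1) = k by omega, nsmul_eq_mul]
    rw [hB]
    push_cast [hmm, hn2]
    rw [hLZ]
    ring
  · rw [xi_single L c q hLZ hcpos hcL]
    positivity
end
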